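/- arXiv:2206.09454 — 4 statements merged into one kernel-verified Lean document; each statement's English description precedes it below -/
import Mathlib

section
/- For all integers 1 < m ≤ N, the real quasimaximal relative projection constant satisfies μ_ℝ(m,N) ≤ δ_{m, m(m+1)/2} = (2/(m+1))·(1 + ((m−1)/2)·√(m+2)). -/
open scoped BigOperators

noncomputable section

/-- `P` is a continuous linear projection from `ℓ∞^N(K)` (that is, `Fin N → K` equipped with
the sup norm, which is the default norm on `Fin N → K`) onto the subspace `Y`. -/
def IsProjectionOnto {K : Type*} [RCLike K] {N : ℕ} (Y : Submodule K (Fin N → K))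
    (P : (Fin N → K) →L[K] (Fin N → K)) : Prop :=
  (∀ x, P x ∈ Y) ∧ ∀ y ∈ Y, P y = y

/-- The relative projection constant `λ(Y, ℓ∞^N(K))` of a subspace `Y ⊆ ℓ∞^N(K)`. -/
def relProjConst {K : Type*} [RCLike K] {N : ℕ} (Y : Submodule K (Fin N → K)) : ℝ :=
  sInf {c : ℝ | ∃ P, IsProjectionOnto Y P ∧ c = ‖P‖}

/-- The maximal relative projection constant `λ_K(m, N)`. -/
def maxRelProjConst (K : Type*) [RCLike K] (m N : ℕ) : ℝ :=
  sSup {c : ℝ | ∃ Y : Submodule K (Fin N → K), Module.finrank K Y = m ∧ c = relProjConst Y}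

/-- The maximal absolute projection constant `λ_K(m)`. -/
def maxAbsProjConst (K : Type*) [RCLike K] (m : ℕ) : ℝ :=
  sSup {c : ℝ | ∃ N, m ≤ N ∧ c = maxRelProjConst K m N}

/-- The quasimaximal relative projection constant `μ_K(m, N)`. -/
def quasiMaxRelProjConst (K : Type*) [RCLike K] (m N : ℕ) : ℝ :=
  sSup {c : ℝ | ∃ U : Matrix (Fin m) (Fin N) K, U * U.conjTranspose = 1 ∧
    c = (1 / (N : ℝ)) * ∑ i, ∑ j, ‖(U.conjTranspose * U) i j‖}

/-- The quasimaximal absolute projection constant `μ_K(m)`. -/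
def quasiMaxAbsProjConst (K : Type*) [RCLike K] (m : ℕ) : ℝ :=
  sSup {c : ℝ | ∃ N, m ≤ N ∧ c = quasiMaxRelProjConst K m N}

/-- The constant `δ_{m,N} = (m/N)(1 + √((N-1)(N-m)/m))`. -/
def deltaConst (m N : ℕ) : ℝ :=
  ((m : ℝ) / N) * (1 + Real.sqrt (((N : ℝ) - 1) * ((N : ℝ) - m) / m))

/-- `u` is an equiangular tight frame of `N` vectors in `K^m`: the vectors are unit vectors,
the matrix `U` with columns `u 1, …, u N` satisfies `U * Uᴴ = α⁻¹ • I` for some `α > 0`,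
and `|⟨u i, u j⟩|` is constant over all pairs `i ≠ j`. -/
def IsETF {K : Type*} [RCLike K] {m N : ℕ} (u : Fin N → EuclideanSpace K (Fin m)) : Prop :=
  (∀ i, ‖u i‖ = 1) ∧
  (∃ α : ℝ, 0 < α ∧
    (Matrix.of fun k i => u i k : Matrix (Fin m) (Fin N) K) *
        (Matrix.of fun k i => u i k : Matrix (Fin m) (Fin N) K).conjTranspose
      = α⁻¹ • (1 : Matrix (Fin m) (Fin m) K)) ∧
  ∃ c : ℝ, ∀ i j, i ≠ j → ‖(inner K (u i) (u j) : K)‖ = c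

private lemma qm_cs_sq {ι : Type*} [Fintype ι] (f g : ι → ℝ) :
    (∑ i, f i * g i) ^ 2 ≤ (∑ i, f i ^ 2) * (∑ i, g i ^ 2) :=
  Finset.sum_mul_sq_le_sq_mul_sq Finset.univ f g

private lemma qm_cs_abs {ι : Type*} [Fintype ι] (f g : ι → ℝ) :
    |∑ i, f i * g i| ≤ Real.sqrt (∑ i, f i ^ 2) * Real.sqrt (∑ i, g i ^ 2) := by
  rw [← Real.sqrt_sq_eq_abs, ← Real.sqrt_mul (by positivity)]
  exact Real.sqrt_le_sqrt (qm_cs_sq f g)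

private lemma qm_expand_sq {ι β : Type*} [Fintype ι] [Fintype β] (h : ι → β → ℝ) :
    ∑ b : β, (∑ i : ι, h i b) ^ 2 = ∑ i : ι, ∑ j : ι, ∑ b : β, h i b * h j b := by
  have h1 : ∀ b : β, (∑ i : ι, h i b) ^ 2 = ∑ i : ι, ∑ j : ι, h i b * h j b := fun b => by
    rw [sq, Fintype.sum_mul_sum]
  simp_rw [h1]
  rw [Finset.sum_comm]
  exact Finset.sum_congr rfl fun i _ => Finset.sum_comm

private lemma qm_sum2 {κ : Type*} [Fintype κ] (f : κ → ℝ) (v : ℝ) :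
    ∑ k : κ, ∑ l : κ, f k * f l * v = (∑ x, f x) ^ 2 * v := by
  simp_rw [show ∀ k l : κ, f k * f l * v = f k * (f l * v) from fun _ _ => by ring]
  simp only [← Finset.mul_sum, ← Finset.sum_mul]
  ring

private lemma qm_sum4 {κ : Type*} [Fintype κ] (f : κ → ℝ) (v : ℝ) :
    ∑ a : κ, ∑ b : κ, ∑ c : κ, ∑ d : κ, f a * f b * f c * f d * v
      = (∑ x, f x) ^ 4 * v := by
  simp_rw [show ∀ a b c d : κ, f a * f b * f c * f d * v = f a * (f b * (f c * (f d * v)))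
      from fun _ _ _ _ => by ring]
  simp only [← Finset.mul_sum, ← Finset.sum_mul]
  ring
private lemma qm_sq_le (a b : ℝ) (ha : 0 ≤ a) (hb : 0 ≤ b) (h : b^2 ≤ a*b) : b^2 ≤ a^2 := by
  rcases le_or_gt b a with hba | hba
  · nlinarith
  · nlinarith

private lemma qm_Q2 (m N : ℕ) (U : Matrix (Fin m) (Fin N) ℝ)
    (horth : ∀ k l : Fin m, ∑ i, U k i * U l i = (if k = l then (1:ℝ) else 0))
    (t : Fin N → ℝ) (ht : ∀ i, t i = Real.sqrt (∑ k, U k i ^ 2)) :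
    ∑ i, ∑ j, (∑ k, U k i * U k j)^2 / (t i * t j) ≤ (N:ℝ) := by
  classical
  have htnn : ∀ i, 0 ≤ t i := fun i => (ht i) ▸ Real.sqrt_nonneg _
  have ht2 : ∀ i, t i ^ 2 = ∑ k, U k i ^ 2 := fun i => by
    rw [ht i]; exact Real.sq_sqrt (by positivity)
  have htzero : ∀ i, t i = 0 → ∀ k, U k i = 0 := by
    intro i hti k
    have h0 : ∑ k, U k i ^ 2 = 0 := by rw [← ht2 i, hti]; norm_num
    have h1 := (Finset.sum_eq_zero_iff_of_nonneg
      (fun k _ => sq_nonneg (U k i))).mp h0 k (Finset.mem_univ k)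
    exact pow_eq_zero_iff two_ne_zero |>.mp h1
  set Pm : Fin m → Fin m → ℝ := fun k l => ∑ i, U k i * U l i / t i with hPm
  set Q : ℝ := ∑ p : Fin m × Fin m, Pm p.1 p.2 ^ 2 with hQ
  have hQnn : 0 ≤ Q := Finset.sum_nonneg fun p _ => sq_nonneg _
  -- representation of the target sum as Q
  have hrep : Q = ∑ i, ∑ j, (∑ k, U k i * U k j)^2 / (t i * t j) := by
    calc Q = ∑ i, ∑ j, ∑ p : Fin m × Fin m,
        (U p.1 i * U p.2 i / t i) * (U p.1 j * U p.2 j / t j) := by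
          rw [hQ, ← qm_expand_sq (fun i (p : Fin m × Fin m) => U p.1 i * U p.2 i / t i)]
      _ = ∑ i, ∑ j, (∑ k, U k i * U k j)^2 / (t i * t j) := by
          refine Finset.sum_congr rfl fun i _ => Finset.sum_congr rfl fun j _ => ?_
          rw [Fintype.sum_prod_type]
          simp_rw [show ∀ k l : Fin m, (U k i * U l i / t i) * (U k j * U l j / t j)
              = (U k i * U k j) * (U l i * U l j) * (t i * t j)⁻¹ from fun k l => by ring]
          rw [qm_sum2 (fun k => U k i * U k j) ((t i * t j)⁻¹), div_eq_mul_inv]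
  rw [← hrep]
  -- now prove Q ≤ N
  set PU : Fin N → Fin m → ℝ := fun i k => ∑ l, Pm k l * U l i with hPU
  set B : Fin N → ℝ := fun i => ∑ k, PU i k ^ 2 with hB
  have hBnn : ∀ i, 0 ≤ B i := fun i => Finset.sum_nonneg fun k _ => sq_nonneg _
  -- step 1 : Q = ∑ i, A i
  have hstep1 : Q = ∑ i, ∑ p : Fin m × Fin m, (U p.1 i * U p.2 i / t i) * Pm p.1 p.2 := by
    rw [hQ, ← Finset.sum_comm]
    refine Finset.sum_congr rfl fun p _ => ?_
    rw [sq]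
    conv_lhs => rw [show Pm p.1 p.2 = ∑ i, U p.1 i * U p.2 i / t i from rfl]
    rw [Finset.sum_mul]
  -- step 2 : A i ≤ sqrt (B i)
  have hstep2 : ∀ i, ∑ p : Fin m × Fin m, (U p.1 i * U p.2 i / t i) * Pm p.1 p.2
      ≤ Real.sqrt (B i) := by
    intro i
    by_cases hti : t i = 0
    · have hU0 : ∀ k, U k i = 0 := htzero i hti
      have : ∀ p : Fin m × Fin m, (U p.1 i * U p.2 i / t i) * Pm p.1 p.2 = 0 := by
        intro p; rw [hU0 p.1]; ring
      rw [Finset.sum_congr rfl fun p _ => this p]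
      simpa using Real.sqrt_nonneg (B i)
    · have h1 : ∑ p : Fin m × Fin m, (U p.1 i * U p.2 i / t i) * Pm p.1 p.2
          = ∑ k, (U k i / t i) * PU i k := by
        rw [Fintype.sum_prod_type]
        refine Finset.sum_congr rfl fun k _ => ?_
        rw [show PU i k = ∑ l, Pm k l * U l i from rfl, Finset.mul_sum]
        exact Finset.sum_congr rfl fun l _ => by ring
      rw [h1]
      have h2 := qm_cs_abs (fun k => U k i / t i) (fun k => PU i k)
      have h3 : ∑ k, (U k i / t i)^2 = 1 := by
        simp_rw [div_pow]
        rw [← Finset.sum_div, ← ht2 i]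
        exact div_self (pow_ne_zero 2 hti)
      rw [h3, Real.sqrt_one, one_mul] at h2
      calc ∑ k, (U k i / t i) * PU i k ≤ |∑ k, (U k i / t i) * PU i k| := le_abs_self _
        _ ≤ Real.sqrt (∑ k, PU i k ^ 2) := h2
        _ = Real.sqrt (B i) := rfl
  -- step 3 : ∑ i, sqrt (B i) ≤ sqrt N * sqrt (∑ i, B i)
  have hstep3 : ∑ i, Real.sqrt (B i) ≤ Real.sqrt N * Real.sqrt (∑ i, B i) := by
    have h1 := qm_cs_abs (fun _ : Fin N => (1:ℝ)) (fun i => Real.sqrt (B i))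
    simp only [one_mul, one_pow] at h1
    have h2 : ∑ i : Fin N, Real.sqrt (B i) ^ 2 = ∑ i, B i :=
      Finset.sum_congr rfl fun i _ => Real.sq_sqrt (hBnn i)
    have h3 : (∑ _i : Fin N, (1:ℝ)) = (N:ℝ) := by simp
    rw [h2, h3] at h1
    exact le_trans (le_abs_self _) h1
  -- step 4 : ∑ i, B i = Q
  have hstep4 : ∑ i, B i = Q := by
    have h1 : ∑ i, B i = ∑ b : Fin N × Fin m, (∑ l, Pm b.2 l * U l b.1) ^ 2 := by
      rw [Fintype.sum_prod_type]
    rw [h1, qm_expand_sq (fun l (b : Fin N × Fin m) => Pm b.2 l * U l b.1)]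
    have h2 : ∀ l l' : Fin m, ∑ b : Fin N × Fin m,
        (Pm b.2 l * U l b.1) * (Pm b.2 l' * U l' b.1)
        = (if l = l' then (1:ℝ) else 0) * ∑ k, Pm k l * Pm k l' := by
      intro l l'
      rw [Fintype.sum_prod_type]
      simp_rw [show ∀ (i : Fin N) (k : Fin m), (Pm k l * U l i) * (Pm k l' * U l' i)
          = (U l i * U l' i) * (Pm k l * Pm k l') from fun i k => by ring]
      simp only [← Finset.sum_mul, ← Finset.mul_sum]
      rw [← horth l l']
    simp_rw [h2]
    simp only [ite_mul, one_mul, zero_mul]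
    simp only [Finset.sum_ite_eq, Finset.mem_univ, if_true]
    rw [hQ, Fintype.sum_prod_type, Finset.sum_comm]
    exact Finset.sum_congr rfl fun l _ => Finset.sum_congr rfl fun k _ => (sq _).symm
  -- combine
  have hQle : Q ≤ Real.sqrt N * Real.sqrt Q := by
    calc Q = ∑ i, ∑ p : Fin m × Fin m, (U p.1 i * U p.2 i / t i) * Pm p.1 p.2 := hstep1
      _ ≤ ∑ i, Real.sqrt (B i) := Finset.sum_le_sum fun i _ => hstep2 i
      _ ≤ Real.sqrt N * Real.sqrt (∑ i, B i) := hstep3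
      _ = Real.sqrt N * Real.sqrt Q := by rw [hstep4]
  have h5 := qm_sq_le (Real.sqrt N) (Real.sqrt Q) (Real.sqrt_nonneg _) (Real.sqrt_nonneg _)
    (by rw [Real.sq_sqrt hQnn]; exact hQle)
  rw [Real.sq_sqrt hQnn, Real.sq_sqrt (Nat.cast_nonneg N)] at h5
  exact h5
private lemma qm_swap3 {ι κ : Type*} [Fintype ι] [Fintype κ] (g : ι → κ → κ → ℝ) :
    ∑ a : κ, ∑ c : κ, ∑ i : ι, g i a c = ∑ i : ι, ∑ a : κ, ∑ c : κ, g i a c := by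
  calc ∑ a : κ, ∑ c : κ, ∑ i : ι, g i a c = ∑ a : κ, ∑ i : ι, ∑ c : κ, g i a c :=
        Finset.sum_congr rfl fun a _ => Finset.sum_comm
    _ = ∑ i : ι, ∑ a : κ, ∑ c : κ, g i a c := Finset.sum_comm

private lemma qm_x4 (x : ℝ) : x^2 * (x^2 * (x^3)⁻¹) = x := by
  by_cases hx : x = 0
  · simp [hx]
  · field_simp


private lemma qm_collapse1 {m : ℕ} (F : Fin m → Fin m → Fin m → Fin m → ℝ) :
    ∑ a : Fin m, ∑ b : Fin m, ∑ c : Fin m, ∑ d : Fin m,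
      F a b c d * ((if a = b then (1:ℝ) else 0) * (if c = d then (1:ℝ) else 0))
      = ∑ a : Fin m, ∑ c : Fin m, F a a c c := by
  simp [mul_ite, ite_mul, mul_zero, zero_mul, mul_one, one_mul, Finset.sum_ite_eq,
    Finset.sum_ite_eq', Finset.mem_univ, if_true]

private lemma qm_collapse2 {m : ℕ} (F : Fin m → Fin m → Fin m → Fin m → ℝ) :
    ∑ a : Fin m, ∑ b : Fin m, ∑ c : Fin m, ∑ d : Fin m,
      F a b c d * ((if a = c then (1:ℝ) else 0) * (if b = d then (1:ℝ) else 0))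
      = ∑ a : Fin m, ∑ b : Fin m, F a b a b := by
  simp [mul_ite, ite_mul, mul_zero, zero_mul, mul_one, one_mul, Finset.sum_ite_eq,
    Finset.sum_ite_eq', Finset.mem_univ, if_true]

private lemma qm_collapse3 {m : ℕ} (F : Fin m → Fin m → Fin m → Fin m → ℝ) :
    ∑ a : Fin m, ∑ b : Fin m, ∑ c : Fin m, ∑ d : Fin m,
      F a b c d * ((if a = d then (1:ℝ) else 0) * (if b = c then (1:ℝ) else 0))
      = ∑ a : Fin m, ∑ b : Fin m, F a b b a := by
  simp [mul_ite, ite_mul, mul_zero, zero_mul, mul_one, one_mul, Finset.sum_ite_eq,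
    Finset.sum_ite_eq', Finset.mem_univ, if_true]

private lemma qm_tau_sq (m : ℕ) :
    ∑ a : Fin m, ∑ b : Fin m, ∑ c : Fin m, ∑ d : Fin m,
      ((if a = b then (1:ℝ) else 0) * (if c = d then (1:ℝ) else 0)
       + (if a = c then (1:ℝ) else 0) * (if b = d then (1:ℝ) else 0)
       + (if a = d then (1:ℝ) else 0) * (if b = c then (1:ℝ) else 0)) ^ 2
      = 3 * (m:ℝ)^2 + 6 * (m:ℝ) := by
  simp only [add_sq, mul_pow, add_mul, mul_add]
  simp [mul_ite, ite_mul, mul_zero, zero_mul, mul_one, one_mul, Finset.sum_ite_eq,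
    Finset.sum_ite_eq', Finset.mem_univ, if_true, Finset.sum_add_distrib,
    Finset.sum_const, Finset.card_univ]
  ring

private lemma qm_Q4 (m N : ℕ) (hm : 2 ≤ m) (U : Matrix (Fin m) (Fin N) ℝ)
    (t : Fin N → ℝ) (ht : ∀ i, t i = Real.sqrt (∑ k, U k i ^ 2)) :
    3 * (∑ i, t i)^2 / ((m:ℝ) * ((m:ℝ)+2))
      ≤ ∑ i, ∑ j, (∑ k, U k i * U k j)^4 / (t i * t j)^3 := by
  classical
  have hm1 : (2:ℝ) ≤ (m:ℝ) := by exact_mod_cast hm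
  have ht2 : ∀ i, t i ^ 2 = ∑ k, U k i ^ 2 := fun i => by
    rw [ht i]; exact Real.sq_sqrt (by positivity)
  -- the 4-tensor F, as a function of ((a,b),(c,d))
  set F : (Fin m × Fin m) × (Fin m × Fin m) → ℝ :=
    fun q => ∑ i, U q.1.1 i * U q.1.2 i * U q.2.1 i * U q.2.2 i / t i ^ 3 with hF
  -- representation of the target sum
  have hrep : ∑ q, F q ^ 2 = ∑ i, ∑ j, (∑ k, U k i * U k j)^4 / (t i * t j)^3 := by
    rw [hF]
    rw [qm_expand_sq (fun i (q : (Fin m × Fin m) × (Fin m × Fin m)) =>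
      U q.1.1 i * U q.1.2 i * U q.2.1 i * U q.2.2 i / t i ^ 3)]
    refine Finset.sum_congr rfl fun i _ => Finset.sum_congr rfl fun j _ => ?_
    simp only [Fintype.sum_prod_type]
    simp_rw [show ∀ a b c d : Fin m,
        (U a i * U b i * U c i * U d i / t i ^ 3) * (U a j * U b j * U c j * U d j / t j ^ 3)
        = (U a i * U a j) * (U b i * U b j) * (U c i * U c j) * (U d i * U d j)
            * ((t i * t j)^3)⁻¹ from fun a b c d => by ring]
    rw [qm_sum4 (fun k => U k i * U k j) (((t i * t j)^3)⁻¹), div_eq_mul_inv]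
  -- contraction with the isotropic tensor equals 3 T
  have hcontr : ∑ q : (Fin m × Fin m) × (Fin m × Fin m),
      F q * ((if q.1.1 = q.1.2 then (1:ℝ) else 0) * (if q.2.1 = q.2.2 then (1:ℝ) else 0)
        + (if q.1.1 = q.2.1 then (1:ℝ) else 0) * (if q.1.2 = q.2.2 then (1:ℝ) else 0)
        + (if q.1.1 = q.2.2 then (1:ℝ) else 0) * (if q.1.2 = q.2.1 then (1:ℝ) else 0))
      = 3 * ∑ i, t i := by
    have hdiag : ∀ (w : Fin m → Fin m → Fin N → ℝ),
        (∀ a c i, w a c i = U a i * U a i * U c i * U c i / t i ^ 3) →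
        ∑ a : Fin m, ∑ c : Fin m, (∑ i, w a c i) = ∑ i, t i := by
      intro w hw
      simp_rw [hw]
      rw [qm_swap3 (fun i a c => U a i * U a i * U c i * U c i / t i ^ 3)]
      refine Finset.sum_congr rfl fun i _ => ?_
      simp_rw [show ∀ a c : Fin m, U a i * U a i * U c i * U c i / t i ^ 3
          = U a i ^ 2 * (U c i ^ 2 * (t i ^ 3)⁻¹) from fun a c => by ring]
      simp only [← Finset.mul_sum, ← Finset.sum_mul]
      rw [← ht2 i]
      exact qm_x4 (t i)
    simp only [mul_add]
    rw [Finset.sum_add_distrib, Finset.sum_add_distrib]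
    have e1 : ∑ q : (Fin m × Fin m) × (Fin m × Fin m),
        F q * ((if q.1.1 = q.1.2 then (1:ℝ) else 0) * (if q.2.1 = q.2.2 then (1:ℝ) else 0))
        = ∑ i, t i := by
      calc ∑ q : (Fin m × Fin m) × (Fin m × Fin m),
          F q * ((if q.1.1 = q.1.2 then (1:ℝ) else 0) * (if q.2.1 = q.2.2 then (1:ℝ) else 0))
          = ∑ a : Fin m, ∑ b : Fin m, ∑ c : Fin m, ∑ d : Fin m,
            F ((a,b),(c,d)) * ((if a = b then (1:ℝ) else 0) * (if c = d then (1:ℝ) else 0)) := by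
              simp only [Fintype.sum_prod_type]
        _ = ∑ a : Fin m, ∑ c : Fin m, F ((a,a),(c,c)) :=
              qm_collapse1 (fun a b c d => F ((a,b),(c,d)))
        _ = ∑ i, t i := hdiag (fun a c i => U a i * U a i * U c i * U c i / t i ^ 3)
              (fun a c i => rfl)
    have e2 : ∑ q : (Fin m × Fin m) × (Fin m × Fin m),
        F q * ((if q.1.1 = q.2.1 then (1:ℝ) else 0) * (if q.1.2 = q.2.2 then (1:ℝ) else 0))
        = ∑ i, t i := by
      calc ∑ q : (Fin m × Fin m) × (Fin m × Fin m),
          F q * ((if q.1.1 = q.2.1 then (1:ℝ) else 0) * (if q.1.2 = q.2.2 then (1:ℝ) else 0))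
          = ∑ a : Fin m, ∑ b : Fin m, ∑ c : Fin m, ∑ d : Fin m,
            F ((a,b),(c,d)) * ((if a = c then (1:ℝ) else 0) * (if b = d then (1:ℝ) else 0)) := by
              simp only [Fintype.sum_prod_type]
        _ = ∑ a : Fin m, ∑ b : Fin m, F ((a,b),(a,b)) :=
              qm_collapse2 (fun a b c d => F ((a,b),(c,d)))
        _ = ∑ i, t i := by
              refine Eq.trans ?_ (hdiag (fun a c i => U a i * U a i * U c i * U c i / t i ^ 3)
                (fun a c i => rfl))
              refine Finset.sum_congr rfl fun a _ => Finset.sum_congr rfl fun b _ => ?_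
              refine Finset.sum_congr rfl fun i _ => by ring
    have e3 : ∑ q : (Fin m × Fin m) × (Fin m × Fin m),
        F q * ((if q.1.1 = q.2.2 then (1:ℝ) else 0) * (if q.1.2 = q.2.1 then (1:ℝ) else 0))
        = ∑ i, t i := by
      calc ∑ q : (Fin m × Fin m) × (Fin m × Fin m),
          F q * ((if q.1.1 = q.2.2 then (1:ℝ) else 0) * (if q.1.2 = q.2.1 then (1:ℝ) else 0))
          = ∑ a : Fin m, ∑ b : Fin m, ∑ c : Fin m, ∑ d : Fin m,
            F ((a,b),(c,d)) * ((if a = d then (1:ℝ) else 0) * (if b = c then (1:ℝ) else 0)) := by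
              simp only [Fintype.sum_prod_type]
        _ = ∑ a : Fin m, ∑ b : Fin m, F ((a,b),(b,a)) :=
              qm_collapse3 (fun a b c d => F ((a,b),(c,d)))
        _ = ∑ i, t i := by
              refine Eq.trans ?_ (hdiag (fun a c i => U a i * U a i * U c i * U c i / t i ^ 3)
                (fun a c i => rfl))
              refine Finset.sum_congr rfl fun a _ => Finset.sum_congr rfl fun b _ => ?_
              refine Finset.sum_congr rfl fun i _ => by ring
    rw [e1, e2, e3]; ring
  -- the norm of the isotropic tensor
  have htau : ∑ q : (Fin m × Fin m) × (Fin m × Fin m),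
      ((if q.1.1 = q.1.2 then (1:ℝ) else 0) * (if q.2.1 = q.2.2 then (1:ℝ) else 0)
        + (if q.1.1 = q.2.1 then (1:ℝ) else 0) * (if q.1.2 = q.2.2 then (1:ℝ) else 0)
        + (if q.1.1 = q.2.2 then (1:ℝ) else 0) * (if q.1.2 = q.2.1 then (1:ℝ) else 0)) ^ 2
      = 3 * (m:ℝ)^2 + 6 * (m:ℝ) := by
    rw [← qm_tau_sq m]
    simp only [Fintype.sum_prod_type]
  -- Cauchy-Schwarz
  have hcs := qm_cs_sq F (fun q : (Fin m × Fin m) × (Fin m × Fin m) =>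
      (if q.1.1 = q.1.2 then (1:ℝ) else 0) * (if q.2.1 = q.2.2 then (1:ℝ) else 0)
        + (if q.1.1 = q.2.1 then (1:ℝ) else 0) * (if q.1.2 = q.2.2 then (1:ℝ) else 0)
        + (if q.1.1 = q.2.2 then (1:ℝ) else 0) * (if q.1.2 = q.2.1 then (1:ℝ) else 0))
  rw [hcontr, htau] at hcs
  rw [← hrep]
  rw [div_le_iff₀ (by positivity)]
  nlinarith [hcs]
private lemma qm_poly (s c : ℝ) (hs0 : 0 < s) (hc0 : 0 ≤ c) (hc1 : c ≤ 1) :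
    c ≤ s^2*(1+2*s)/(2*s*(1+s)^2) + (1+2*s+3*s^2)/(2*s*(1+s)^2) * c^2
      + (-(1/(2*s*(1+s)^2))) * c^4 := by
  have hD : (0:ℝ) < 2*s*(1+s)^2 := by positivity
  have key : s^2*(1+2*s)/(2*s*(1+s)^2) + (1+2*s+3*s^2)/(2*s*(1+s)^2) * c^2
      + (-(1/(2*s*(1+s)^2))) * c^4 - c
      = ((c - s)^2 * (1 - c) * (c + 1 + 2*s)) / (2*s*(1+s)^2) := by
    field_simp
    ring
  have hpos : 0 ≤ ((c - s)^2 * (1 - c) * (c + 1 + 2*s)) / (2*s*(1+s)^2) := by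
    apply div_nonneg _ hD.le
    exact mul_nonneg (mul_nonneg (sq_nonneg _) (by linarith)) (by linarith)
  linarith [key ▸ hpos]

private lemma qm_pair (s : ℝ) (hs0 : 0 < s) (a b r : ℝ) (ha : 0 ≤ a) (hb : 0 ≤ b)
    (hr : |r| ≤ a * b) :
    |r| ≤ s^2*(1+2*s)/(2*s*(1+s)^2) * (a*b)
      + (1+2*s+3*s^2)/(2*s*(1+s)^2) * (r^2/(a*b))
      + (-(1/(2*s*(1+s)^2))) * (r^4/(a*b)^3) := by
  by_cases hab : a * b = 0
  · have hr0 : r = 0 := abs_eq_zero.mp (le_antisymm (hab ▸ hr) (abs_nonneg r))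
    simp [hr0, hab]
  · have habpos : 0 < a * b := lt_of_le_of_ne (mul_nonneg ha hb) (Ne.symm hab)
    have hc0 : 0 ≤ |r| / (a*b) := div_nonneg (abs_nonneg r) habpos.le
    have hc1 : |r| / (a*b) ≤ 1 := (div_le_one habpos).mpr hr
    have hp := qm_poly s (|r| / (a*b)) hs0 hc0 hc1
    have e1 : (a*b) * (|r|/(a*b)) = |r| := by rw [← mul_div_assoc]; exact mul_div_cancel_left₀ _ hab
    have e2 : (a*b) * (|r|/(a*b))^2 = r^2/(a*b) := by
      rw [div_pow, sq_abs]; field_simp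
    have e3 : (a*b) * (|r|/(a*b))^4 = r^4/(a*b)^3 := by
      have habs4 : |r|^4 = r^4 := by
        rw [show (4:ℕ) = 2*2 from rfl, pow_mul, pow_mul, sq_abs]
      rw [div_pow, habs4]; field_simp
    calc |r| = (a*b) * (|r|/(a*b)) := e1.symm
      _ ≤ (a*b) * (s^2*(1+2*s)/(2*s*(1+s)^2)
            + (1+2*s+3*s^2)/(2*s*(1+s)^2) * (|r|/(a*b))^2
            + (-(1/(2*s*(1+s)^2))) * (|r|/(a*b))^4) :=
          mul_le_mul_of_nonneg_left hp habpos.le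
      _ = s^2*(1+2*s)/(2*s*(1+s)^2) * (a*b)
            + (1+2*s+3*s^2)/(2*s*(1+s)^2) * ((a*b) * (|r|/(a*b))^2)
            + (-(1/(2*s*(1+s)^2))) * ((a*b) * (|r|/(a*b))^4) := by ring
      _ = _ := by rw [e2, e3]

private lemma qm_coeff (s M : ℝ) (hs0 : 0 < s) (hshalf : s ≤ 1/2) (hM : s^2 * (M+2) = 1) :
    (s^2*(1+2*s)/(2*s*(1+s)^2) + 3*(-(1/(2*s*(1+s)^2)))/(M*(M+2))) * M
      + (1+2*s+3*s^2)/(2*s*(1+s)^2) = (1-s)*(1+2*s)/(s*(1+s)) := by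
  have hsne : s ≠ 0 := ne_of_gt hs0
  have h2s : (0:ℝ) < 1 - 2*s^2 := by nlinarith
  have h2sne : (1:ℝ) - 2*s^2 ≠ 0 := ne_of_gt h2s
  have h1s : (1:ℝ) + s ≠ 0 := by positivity
  have hMe : M = (1 - 2*s^2)/s^2 := by
    field_simp
    nlinarith [hM]
  rw [hMe]
  have h2sne' : (1:ℝ) - s^2*2 ≠ 0 := by intro h; apply h2sne; linarith
  field_simp
  ring

private lemma qm_coeffpos (s M : ℝ) (hs0 : 0 < s) (hshalf : s ≤ 1/2) (hM : s^2 * (M+2) = 1) :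
    0 ≤ s^2*(1+2*s)/(2*s*(1+s)^2) + 3*(-(1/(2*s*(1+s)^2)))/(M*(M+2)) := by
  have hsne : s ≠ 0 := ne_of_gt hs0
  have h2s : (0:ℝ) < 1 - 2*s^2 := by nlinarith
  have h2sne : (1:ℝ) - 2*s^2 ≠ 0 := ne_of_gt h2s
  have h1s : (1:ℝ) + s ≠ 0 := by positivity
  have hMe : M = (1 - 2*s^2)/s^2 := by
    field_simp
    nlinarith [hM]
  rw [hMe]
  have key : s^2*(1+2*s)/(2*s*(1+s)^2) + 3*(-(1/(2*s*(1+s)^2)))/(((1 - 2*s^2)/s^2)*(((1 - 2*s^2)/s^2)+2))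
      = s*(1+2*s-5*s^2-4*s^3)/(2*(1+s)^2*(1-2*s^2)) := by
    have h2sne' : (1:ℝ) - s^2*2 ≠ 0 := by intro h; apply h2sne; linarith
    field_simp
    ring
  rw [key]
  have hnum : 0 ≤ 1+2*s-5*s^2-4*s^3 := by nlinarith
  positivity

private lemma qm_key (m N : ℕ) (hm : 2 ≤ m) (s : ℝ) (hs : s = 1 / Real.sqrt ((m:ℝ)+2))
    (U : Matrix (Fin m) (Fin N) ℝ)
    (horth : ∀ k l : Fin m, ∑ i, U k i * U l i = (if k = l then (1:ℝ) else 0)) :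
    ∑ i : Fin N, ∑ j : Fin N, |∑ k, U k i * U k j|
      ≤ (N:ℝ) * ((1 - s) * (1 + 2*s) / (s * (1 + s))) := by
  classical
  have hm1 : (2:ℝ) ≤ (m:ℝ) := by exact_mod_cast hm
  have hsqpos : 0 < Real.sqrt ((m:ℝ)+2) := Real.sqrt_pos.mpr (by linarith)
  have hs0 : 0 < s := by rw [hs]; positivity
  have hs2 : s^2 * ((m:ℝ)+2) = 1 := by
    rw [hs, div_pow, one_pow, Real.sq_sqrt (by linarith : (0:ℝ) ≤ (m:ℝ)+2)]
    field_simp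
  have hshalf : s ≤ 1/2 := by
    rw [hs]
    have h4 : 2 ≤ Real.sqrt ((m:ℝ)+2) := by
      have := Real.sqrt_le_sqrt (show (4:ℝ) ≤ (m:ℝ)+2 by linarith)
      rwa [show Real.sqrt 4 = 2 by
        rw [show (4:ℝ) = 2^2 by norm_num, Real.sqrt_sq (by norm_num : (0:ℝ) ≤ 2)]] at this
    rw [div_le_div_iff₀ hsqpos (by norm_num)]
    linarith
  -- column norms
  set t : Fin N → ℝ := fun i => Real.sqrt (∑ k, U k i ^ 2) with htdef
  have ht : ∀ i, t i = Real.sqrt (∑ k, U k i ^ 2) := fun _ => rfl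
  have htnn : ∀ i, 0 ≤ t i := fun i => Real.sqrt_nonneg _
  have ht2 : ∀ i, t i ^ 2 = ∑ k, U k i ^ 2 := fun i => by
    rw [ht i]; exact Real.sq_sqrt (by positivity)
  have htrace : ∑ i, t i ^ 2 = (m:ℝ) := by
    simp_rw [ht2]
    rw [Finset.sum_comm]
    have h1 : ∀ k : Fin m, ∑ i, U k i ^ 2 = 1 := fun k => by
      have := horth k k; simpa [sq] using this
    simp [h1]
  have hCS : ∀ i j, |∑ k, U k i * U k j| ≤ t i * t j := by
    intro i j
    have h := qm_cs_abs (fun k => U k i) (fun k => U k j)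
    rw [← ht i, ← ht j] at h
    exact h
  set T : ℝ := ∑ i, t i with hT
  have hT2 : T^2 ≤ (N:ℝ) * m := by
    have h := qm_cs_sq (fun _ : Fin N => (1:ℝ)) t
    simp only [one_mul, one_pow] at h
    calc T^2 ≤ (∑ _i : Fin N, (1:ℝ)) * ∑ i, t i ^ 2 := h
      _ = (N:ℝ) * m := by rw [htrace]; simp
  -- abbreviations for the coefficients
  set Ac : ℝ := s^2*(1+2*s)/(2*s*(1+s)^2) with hAc
  set Bc : ℝ := (1+2*s+3*s^2)/(2*s*(1+s)^2) with hBc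
  set Cc : ℝ := -(1/(2*s*(1+s)^2)) with hCc
  have hBc0 : 0 ≤ Bc := by rw [hBc]; positivity
  have hCc0 : Cc ≤ 0 := by rw [hCc]; simp; positivity
  -- pointwise bound and summation
  have hsum : ∑ i : Fin N, ∑ j : Fin N, |∑ k, U k i * U k j|
      ≤ Ac * T^2 + Bc * (∑ i, ∑ j, (∑ k, U k i * U k j)^2/(t i * t j))
        + Cc * (∑ i, ∑ j, (∑ k, U k i * U k j)^4/(t i * t j)^3) := by
    have h1 : ∑ i : Fin N, ∑ j : Fin N, |∑ k, U k i * U k j|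
        ≤ ∑ i : Fin N, ∑ j : Fin N, (Ac * (t i * t j)
            + Bc * ((∑ k, U k i * U k j)^2/(t i * t j))
            + Cc * ((∑ k, U k i * U k j)^4/(t i * t j)^3)) := by
      refine Finset.sum_le_sum fun i _ => Finset.sum_le_sum fun j _ => ?_
      exact qm_pair s hs0 (t i) (t j) _ (htnn i) (htnn j) (hCS i j)
    refine le_trans h1 (le_of_eq ?_)
    simp only [Finset.sum_add_distrib, ← Finset.mul_sum]
    rw [show (∑ i : Fin N, t i * ∑ j : Fin N, t j) = T^2 by
      rw [← Finset.sum_mul, hT, sq]]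
  -- apply the three bounds
  have hq2 := qm_Q2 m N U horth t ht
  have hq4 := qm_Q4 m N hm U t ht
  have hstep : Ac * T^2 + Bc * (∑ i, ∑ j, (∑ k, U k i * U k j)^2/(t i * t j))
        + Cc * (∑ i, ∑ j, (∑ k, U k i * U k j)^4/(t i * t j)^3)
      ≤ Ac * T^2 + Bc * (N:ℝ) + Cc * (3 * T^2 / ((m:ℝ) * ((m:ℝ)+2))) := by
    have h2 : Bc * (∑ i, ∑ j, (∑ k, U k i * U k j)^2/(t i * t j)) ≤ Bc * (N:ℝ) :=
      mul_le_mul_of_nonneg_left hq2 hBc0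
    have h3 : Cc * (∑ i, ∑ j, (∑ k, U k i * U k j)^4/(t i * t j)^3)
        ≤ Cc * (3 * T^2 / ((m:ℝ) * ((m:ℝ)+2))) :=
      mul_le_mul_of_nonpos_left hq4 hCc0
    linarith
  have hcollect : Ac * T^2 + Bc * (N:ℝ) + Cc * (3 * T^2 / ((m:ℝ) * ((m:ℝ)+2)))
      = (Ac + 3*Cc/((m:ℝ)*((m:ℝ)+2))) * T^2 + Bc * (N:ℝ) := by ring
  have hA' : 0 ≤ Ac + 3*Cc/((m:ℝ)*((m:ℝ)+2)) := by
    rw [hAc, hCc]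
    exact qm_coeffpos s (m:ℝ) hs0 hshalf hs2
  have hstep2 : (Ac + 3*Cc/((m:ℝ)*((m:ℝ)+2))) * T^2 + Bc * (N:ℝ)
      ≤ (Ac + 3*Cc/((m:ℝ)*((m:ℝ)+2))) * ((N:ℝ) * m) + Bc * (N:ℝ) := by
    have := mul_le_mul_of_nonneg_left hT2 hA'
    linarith
  have hfinal : (Ac + 3*Cc/((m:ℝ)*((m:ℝ)+2))) * ((N:ℝ) * m) + Bc * (N:ℝ)
      = (N:ℝ) * ((1 - s) * (1 + 2*s) / (s * (1 + s))) := by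
    have hc := qm_coeff s (m:ℝ) hs0 hshalf hs2
    rw [hAc, hBc, hCc]
    calc (s^2*(1+2*s)/(2*s*(1+s)^2) + 3*(-(1/(2*s*(1+s)^2)))/((m:ℝ)*((m:ℝ)+2))) * ((N:ℝ) * m)
          + (1+2*s+3*s^2)/(2*s*(1+s)^2) * (N:ℝ)
        = (N:ℝ) * ((s^2*(1+2*s)/(2*s*(1+s)^2)
            + 3*(-(1/(2*s*(1+s)^2)))/((m:ℝ)*((m:ℝ)+2))) * (m:ℝ)
            + (1+2*s+3*s^2)/(2*s*(1+s)^2)) := by ring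
      _ = (N:ℝ) * ((1 - s) * (1 + 2*s) / (s * (1 + s))) := by rw [hc]
  calc ∑ i : Fin N, ∑ j : Fin N, |∑ k, U k i * U k j|
      ≤ Ac * T^2 + Bc * (∑ i, ∑ j, (∑ k, U k i * U k j)^2/(t i * t j))
        + Cc * (∑ i, ∑ j, (∑ k, U k i * U k j)^4/(t i * t j)^3) := hsum
    _ ≤ Ac * T^2 + Bc * (N:ℝ) + Cc * (3 * T^2 / ((m:ℝ) * ((m:ℝ)+2))) := hstep
    _ = (Ac + 3*Cc/((m:ℝ)*((m:ℝ)+2))) * T^2 + Bc * (N:ℝ) := hcollect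
    _ ≤ (Ac + 3*Cc/((m:ℝ)*((m:ℝ)+2))) * ((N:ℝ) * m) + Bc * (N:ℝ) := hstep2
    _ = (N:ℝ) * ((1 - s) * (1 + 2*s) / (s * (1 + s))) := hfinal

private lemma qm_nat_cast (m : ℕ) : ((m * (m+1) / 2 : ℕ) : ℝ) = (m:ℝ) * ((m:ℝ)+1) / 2 := by
  rw [Nat.cast_div (Nat.even_mul_succ_self m).two_dvd (by norm_num)]
  push_cast; ring

private lemma qm_delta1 (m : ℕ) (hm : 2 ≤ m) :
    ((m : ℝ) / ((m * (m+1) / 2 : ℕ) : ℝ)) *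
      (1 + Real.sqrt ((((m * (m+1) / 2 : ℕ) : ℝ) - 1) * (((m * (m+1) / 2 : ℕ) : ℝ) - m) / m))
    = (2 / ((m : ℝ) + 1)) * (1 + (((m : ℝ) - 1) / 2) * Real.sqrt ((m : ℝ) + 2)) := by
  have hm1 : (2:ℝ) ≤ (m:ℝ) := by exact_mod_cast hm
  rw [qm_nat_cast]
  have h1 : ((m:ℝ)*((m:ℝ)+1)/2 - 1) * ((m:ℝ)*((m:ℝ)+1)/2 - (m:ℝ)) / (m:ℝ)
      = (((m:ℝ)-1)/2)^2 * ((m:ℝ)+2) := by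
    field_simp
    ring
  rw [h1, Real.sqrt_mul (sq_nonneg _), Real.sqrt_sq (by linarith)]
  have h2 : (m:ℝ)/((m:ℝ)*((m:ℝ)+1)/2) = 2/((m:ℝ)+1) := by
    rw [div_eq_div_iff (by positivity) (by positivity)]
    ring
  rw [h2]

private lemma qm_delta2 (m : ℕ) (hm : 2 ≤ m) (s : ℝ) (hs : s = 1 / Real.sqrt ((m:ℝ)+2)) :
    (2 / ((m : ℝ) + 1)) * (1 + (((m : ℝ) - 1) / 2) * Real.sqrt ((m : ℝ) + 2))
      = (1 - s) * (1 + 2*s) / (s * (1 + s)) := by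
  have hm1 : (2:ℝ) ≤ (m:ℝ) := by exact_mod_cast hm
  have hsqpos : 0 < Real.sqrt ((m:ℝ)+2) := Real.sqrt_pos.mpr (by linarith)
  have hs0 : 0 < s := by rw [hs]; positivity
  have hs2 : s^2 * ((m:ℝ)+2) = 1 := by
    rw [hs, div_pow, one_pow, Real.sq_sqrt (by linarith : (0:ℝ) ≤ (m:ℝ)+2)]
    field_simp
  have hsqrt : Real.sqrt ((m:ℝ)+2) = 1/s := by
    rw [hs]; rw [one_div_one_div]
  have hshalf : s ≤ 1/2 := by
    rw [hs]
    have h4 : 2 ≤ Real.sqrt ((m:ℝ)+2) := by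
      have := Real.sqrt_le_sqrt (show (4:ℝ) ≤ (m:ℝ)+2 by linarith)
      rwa [show Real.sqrt 4 = 2 by
        rw [show (4:ℝ) = 2^2 by norm_num, Real.sqrt_sq (by norm_num : (0:ℝ) ≤ 2)]] at this
    rw [div_le_div_iff₀ hsqpos (by norm_num)]
    linarith
  have hmr : (m:ℝ) = 1/s^2 - 2 := by
    field_simp at hs2 ⊢
    linarith
  rw [hsqrt, hmr]
  have h1 : 1/s^2 - 2 + 1 = (1-s)*(1+s)/s^2 := by field_simp; ring
  have hs1 : s < 1 := by linarith
  rw [h1]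
  have hne1 : (1:ℝ) - s ≠ 0 := by linarith
  have hne2 : (1:ℝ) + s ≠ 0 := by linarith
  have hne0 : s ≠ 0 := ne_of_gt hs0
  field_simp
  ring

/-- For `1 < m ≤ N`, the real quasimaximal relative projection constant
satisfies `μ_ℝ(m,N) ≤ δ_{m, m(m+1)/2} = (2/(m+1))(1 + ((m-1)/2)√(m+2))`. -/
theorem quasiMaxRelProjConst_real_le (m N : ℕ) (hm : 1 < m) (hmN : m ≤ N) :
    quasiMaxRelProjConst ℝ m N ≤ deltaConst m (m * (m + 1) / 2) ∧
    deltaConst m (m * (m + 1) / 2) =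
      (2 / ((m : ℝ) + 1)) * (1 + (((m : ℝ) - 1) / 2) * Real.sqrt ((m : ℝ) + 2)) := by
  have hm2 : 2 ≤ m := hm
  have hm1 : (2:ℝ) ≤ (m:ℝ) := by exact_mod_cast hm2
  have hsqpos : 0 < Real.sqrt ((m:ℝ)+2) := Real.sqrt_pos.mpr (by linarith)
  set s : ℝ := 1 / Real.sqrt ((m:ℝ)+2) with hs
  have hs0 : 0 < s := by rw [hs]; positivity
  have hshalf : s ≤ 1/2 := by
    rw [hs]
    have h4 : 2 ≤ Real.sqrt ((m:ℝ)+2) := by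
      have := Real.sqrt_le_sqrt (show (4:ℝ) ≤ (m:ℝ)+2 by linarith)
      rwa [show Real.sqrt 4 = 2 by
        rw [show (4:ℝ) = 2^2 by norm_num, Real.sqrt_sq (by norm_num : (0:ℝ) ≤ 2)]] at this
    rw [div_le_div_iff₀ hsqpos (by norm_num)]
    linarith
  have hδ1 : deltaConst m (m * (m + 1) / 2) =
      (2 / ((m : ℝ) + 1)) * (1 + (((m : ℝ) - 1) / 2) * Real.sqrt ((m : ℝ) + 2)) := by
    rw [deltaConst]
    exact qm_delta1 m hm2
  have hδ2 : (2 / ((m : ℝ) + 1)) * (1 + (((m : ℝ) - 1) / 2) * Real.sqrt ((m : ℝ) + 2))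
      = (1 - s) * (1 + 2*s) / (s * (1 + s)) := qm_delta2 m hm2 s hs
  have hEnn : 0 ≤ (1 - s) * (1 + 2*s) / (s * (1 + s)) := by
    apply div_nonneg
    · apply mul_nonneg <;> linarith
    · apply mul_nonneg <;> linarith
  refine ⟨?_, hδ1⟩
  rw [hδ1, hδ2, quasiMaxRelProjConst]
  apply Real.sSup_le _ hEnn
  rintro x ⟨U, hU, rfl⟩
  have horth : ∀ k l : Fin m, ∑ i, U k i * U l i = (if k = l then (1:ℝ) else 0) := by
    intro k l
    have h1 : (U * U.conjTranspose) k l = (1 : Matrix (Fin m) (Fin m) ℝ) k l := by rw [hU]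
    simpa [Matrix.mul_apply, Matrix.conjTranspose_apply, Matrix.one_apply] using h1
  have hent : ∀ i j : Fin N, ‖(U.conjTranspose * U) i j‖ = |∑ k, U k i * U k j| := by
    intro i j
    simp [Matrix.mul_apply, Matrix.conjTranspose_apply, Real.norm_eq_abs]
  have hNpos : (0:ℝ) < (N:ℝ) := by
    have : 0 < N := lt_of_lt_of_le (by omega) hmN
    exact_mod_cast this
  have hkey := qm_key m N hm2 s hs U horth
  calc (1 / (N : ℝ)) * ∑ i, ∑ j, ‖(U.conjTranspose * U) i j‖
      = (1 / (N : ℝ)) * ∑ i : Fin N, ∑ j : Fin N, |∑ k, U k i * U k j| := by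
        simp_rw [hent]
    _ ≤ (1 / (N : ℝ)) * ((N:ℝ) * ((1 - s) * (1 + 2*s) / (s * (1 + s)))) := by
        apply mul_le_mul_of_nonneg_left hkey
        positivity
    _ = (1 - s) * (1 + 2*s) / (s * (1 + s)) := by
        field_simp
end
end

section
/- For all integers 1 < m ≤ N, the complex quasimaximal relative projection constant satisfies μ_ℂ(m,N) ≤ δ_{m, m²} = (1/m)·(1 + (m−1)·√(m+1)). -/
open scoped BigOperators

noncomputable section

namespace QMPC

variable {m N : ℕ}

private def Gm (U : Matrix (Fin m) (Fin N) ℂ) (i j : Fin N) : ℂ :=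
  ∑ k, (starRingEnd ℂ) (U k i) * U k j

private def tv (U : Matrix (Fin m) (Fin N) ℂ) (i : Fin N) : ℝ :=
  ∑ k, Complex.normSq (U k i)

private lemma tv_nonneg (U : Matrix (Fin m) (Fin N) ℂ) (i : Fin N) : 0 ≤ tv U i :=
  Finset.sum_nonneg fun k _ => Complex.normSq_nonneg _

private lemma lem_G_apply (U : Matrix (Fin m) (Fin N) ℂ) (i j : Fin N) :
    (U.conjTranspose * U) i j = Gm U i j := by
  simp [Matrix.mul_apply, Matrix.conjTranspose_apply, Gm]

private lemma lem_frame (U : Matrix (Fin m) (Fin N) ℂ) (hU : U * U.conjTranspose = 1)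
    (k l : Fin m) : ∑ i, U k i * (starRingEnd ℂ) (U l i) = if k = l then 1 else 0 := by
  have := congrFun (congrFun hU k) l
  simpa [Matrix.mul_apply, Matrix.one_apply, Matrix.conjTranspose_apply] using this

private lemma lem_tsum (U : Matrix (Fin m) (Fin N) ℂ) (hU : U * U.conjTranspose = 1) :
    ∑ i, tv U i = m := by
  have h : ∀ k : Fin m, ∑ i, Complex.normSq (U k i) = 1 := by
    intro k
    have h1 := lem_frame U hU k k
    rw [if_pos rfl] at h1
    have h2 : ((∑ i, Complex.normSq (U k i) : ℝ) : ℂ) = 1 := by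
      push_cast
      rw [← h1]
      exact Finset.sum_congr rfl fun i _ => (Complex.mul_conj (U k i)).symm
    exact_mod_cast h2
  have : ∑ i, tv U i = ∑ k : Fin m, ∑ i, Complex.normSq (U k i) := by
    rw [Finset.sum_comm]
    rfl
  rw [this]
  simp [h]


private lemma lem_Gsym (U : Matrix (Fin m) (Fin N) ℂ) (i j : Fin N) :
    Gm U j i = (starRingEnd ℂ) (Gm U i j) := by
  rw [Gm, Gm, map_sum]
  refine Finset.sum_congr rfl fun k _ => ?_
  simp [mul_comm]

private lemma lem_row (U : Matrix (Fin m) (Fin N) ℂ) (hU : U * U.conjTranspose = 1)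
    (i : Fin N) : ∑ j, ‖Gm U i j‖^2 = tv U i := by
  have hc : ((∑ j, ‖Gm U i j‖^2 : ℝ) : ℂ) = ∑ j, Gm U i j * (starRingEnd ℂ) (Gm U i j) := by
    push_cast
    refine Finset.sum_congr rfl fun j _ => ?_
    rw [Complex.mul_conj, Complex.normSq_eq_norm_sq]
    norm_cast
  have hexp : ∀ j, Gm U i j * (starRingEnd ℂ) (Gm U i j)
      = ∑ k, ∑ l, ((starRingEnd ℂ) (U k i) * U l i) * (U k j * (starRingEnd ℂ) (U l j)) := by
    intro j
    rw [Gm, map_sum, Finset.sum_mul_sum]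
    refine Finset.sum_congr rfl fun k _ => Finset.sum_congr rfl fun l _ => ?_
    simp only [map_mul, Complex.conj_conj]
    ring
  have hswap : ∑ j, Gm U i j * (starRingEnd ℂ) (Gm U i j)
      = ∑ k, ∑ l, ((starRingEnd ℂ) (U k i) * U l i) * ∑ j, (U k j * (starRingEnd ℂ) (U l j)) := by
    simp only [hexp]
    rw [Finset.sum_comm]
    refine Finset.sum_congr rfl fun k _ => ?_
    rw [Finset.sum_comm]
    refine Finset.sum_congr rfl fun l _ => ?_
    rw [Finset.mul_sum]
  have hfin : ∑ j, Gm U i j * (starRingEnd ℂ) (Gm U i j) = ((tv U i : ℝ) : ℂ) := by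
    rw [hswap]
    have : ∀ k : Fin m, ∑ l, ((starRingEnd ℂ) (U k i) * U l i)
        * ∑ j, (U k j * (starRingEnd ℂ) (U l j)) = (starRingEnd ℂ) (U k i) * U k i := by
      intro k
      have : ∀ l, ((starRingEnd ℂ) (U k i) * U l i) * ∑ j, (U k j * (starRingEnd ℂ) (U l j))
          = if k = l then (starRingEnd ℂ) (U k i) * U l i else 0 := by
        intro l
        rw [lem_frame U hU k l]
        split_ifs <;> simp
      rw [Finset.sum_congr rfl fun l _ => this l]
      simp
    rw [Finset.sum_congr rfl fun k _ => this k]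
    rw [tv]
    push_cast
    refine Finset.sum_congr rfl fun k _ => ?_
    rw [mul_comm, Complex.mul_conj, Complex.normSq_eq_norm_sq]
    try norm_cast
  have := hc.trans hfin
  exact_mod_cast this

private lemma lem_CS (U : Matrix (Fin m) (Fin N) ℂ) (i j : Fin N) :
    ‖Gm U i j‖ ≤ Real.sqrt (tv U i) * Real.sqrt (tv U j) := by
  let x : EuclideanSpace ℂ (Fin m) := WithLp.toLp 2 (fun k => U k i)
  let y : EuclideanSpace ℂ (Fin m) := WithLp.toLp 2 (fun k => U k j)
  have hx : ‖x‖ = Real.sqrt (tv U i) := by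
    rw [EuclideanSpace.norm_eq]
    congr 1
    rw [tv]
    refine Finset.sum_congr rfl fun k _ => ?_
    rw [Complex.normSq_eq_norm_sq]
  have hy : ‖y‖ = Real.sqrt (tv U j) := by
    rw [EuclideanSpace.norm_eq]
    congr 1
    rw [tv]
    refine Finset.sum_congr rfl fun k _ => ?_
    rw [Complex.normSq_eq_norm_sq]
  have hinner : (inner ℂ x y : ℂ) = Gm U i j := by
    rw [Gm, PiLp.inner_apply]
    refine Finset.sum_congr rfl fun k _ => ?_
    exact RCLike.inner_apply' _ _
  calc ‖Gm U i j‖ = ‖(inner ℂ x y : ℂ)‖ := by rw [hinner]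
    _ ≤ ‖x‖ * ‖y‖ := norm_inner_le_norm x y
    _ = Real.sqrt (tv U i) * Real.sqrt (tv U j) := by rw [hx, hy]

private lemma lem_zero (U : Matrix (Fin m) (Fin N) ℂ) {i : Fin N} (h : tv U i = 0)
    (j : Fin N) : Gm U i j = 0 := by
  have hz : ∀ k, U k i = 0 := by
    intro k
    have := (Finset.sum_eq_zero_iff_of_nonneg (fun k _ => Complex.normSq_nonneg (U k i))).1 h k
      (Finset.mem_univ k)
    exact Complex.normSq_eq_zero.1 this
  rw [Gm]
  simp [hz]

private lemma rpow_aux1 {x : ℝ} (hx : 0 ≤ x) : (x ^ (-(3:ℝ)/4))^2 * x^2 = Real.sqrt x := by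
  rcases eq_or_lt_of_le hx with h | h
  · rw [← h, Real.zero_rpow (by norm_num), Real.sqrt_zero]
    norm_num
  · have h1 : (x ^ (-(3:ℝ)/4))^2 = x ^ (-(3:ℝ)/2) := by
      rw [← Real.rpow_natCast (x ^ (-(3:ℝ)/4)) 2, ← Real.rpow_mul hx]
      norm_num
    rw [h1, ← Real.rpow_natCast x 2, ← Real.rpow_add h, Real.sqrt_eq_rpow]
    norm_num

private lemma rpow_aux2 {x : ℝ} (hx : 0 ≤ x) : x ^ (-(3:ℝ)/4) * x = x ^ ((1:ℝ)/4) := by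
  rcases eq_or_lt_of_le hx with h | h
  · rw [← h, Real.zero_rpow (by norm_num), Real.zero_rpow (by norm_num)]
    norm_num
  · nth_rewrite 2 [← Real.rpow_one x]
    rw [← Real.rpow_add h]
    norm_num

private lemma rpow_aux3 {x : ℝ} (hx : 0 ≤ x) : (x ^ ((1:ℝ)/4))^2 = Real.sqrt x := by
  rw [← Real.rpow_natCast (x ^ ((1:ℝ)/4)) 2, ← Real.rpow_mul hx, Real.sqrt_eq_rpow]
  norm_num



private lemma sum_swap4 {M : Type*} [AddCommMonoid M] {α β γ δ : Type*} [Fintype α] [Fintype β]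
    [Fintype γ] [Fintype δ] (f : α → β → γ → δ → M) :
    ∑ a, ∑ b, ∑ c, ∑ d, f a b c d = ∑ c, ∑ d, ∑ a, ∑ b, f a b c d := by
  calc ∑ a, ∑ b, ∑ c, ∑ d, f a b c d
      = ∑ a, ∑ c, ∑ b, ∑ d, f a b c d := Finset.sum_congr rfl fun a _ => Finset.sum_comm
    _ = ∑ c, ∑ a, ∑ b, ∑ d, f a b c d := Finset.sum_comm
    _ = ∑ c, ∑ a, ∑ d, ∑ b, f a b c d :=
        Finset.sum_congr rfl fun c _ => Finset.sum_congr rfl fun a _ => Finset.sum_comm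
    _ = ∑ c, ∑ d, ∑ a, ∑ b, f a b c d := Finset.sum_congr rfl fun c _ => Finset.sum_comm

private lemma lem_welch (U : Matrix (Fin m) (Fin N) ℂ) (hm : 0 < m) :
    2*(∑ i, Real.sqrt (tv U i))^2/((m:ℝ)^2+m)
      ≤ ∑ i, ∑ j, ((tv U i ^ (-(3:ℝ)/4)) * (tv U j ^ (-(3:ℝ)/4)) * ‖Gm U i j‖^2)^2 := by
  set σ : ℝ := ∑ i, Real.sqrt (tv U i) with hσdef
  set ρ : ℝ := σ/((m:ℝ)^2+m) with hρdef
  set w : Fin N → (Fin m × Fin m) → ℂ :=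
    fun i p => ((tv U i ^ (-(3:ℝ)/4) : ℝ) : ℂ) * (U p.1 i * (starRingEnd ℂ) (U p.2 i)) with hwdef
  set A : (Fin m × Fin m) → (Fin m × Fin m) → ℂ :=
    fun p q => ∑ i, w i p * (starRingEnd ℂ) (w i q) with hAdef
  -- (a) sum of normSq of w i
  have hwnorm : ∀ i, ∑ p : Fin m × Fin m, Complex.normSq (w i p) = Real.sqrt (tv U i) := by
    intro i
    have h1 : ∀ p : Fin m × Fin m, Complex.normSq (w i p)
        = (tv U i ^ (-(3:ℝ)/4))^2 * (Complex.normSq (U p.1 i) * Complex.normSq (U p.2 i)) := by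
      intro p
      rw [hwdef]
      simp only [Complex.normSq_mul, Complex.normSq_conj, Complex.normSq_ofReal]
      ring
    rw [Finset.sum_congr rfl fun p _ => h1 p]
    rw [← Finset.mul_sum]
    rw [Fintype.sum_prod_type]
    have h2 : ∑ k : Fin m, ∑ l : Fin m, Complex.normSq (U k i) * Complex.normSq (U l i)
        = tv U i * tv U i := by
      rw [tv, Finset.sum_mul_sum]
    rw [h2, ← rpow_aux1 (tv_nonneg U i)]
    ring
  -- (b) trace of A
  have hAdiag : ∑ p : Fin m × Fin m, A p p = ((σ : ℝ) : ℂ) := by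
    have h1 : ∀ p : Fin m × Fin m, A p p = ∑ i, ((Complex.normSq (w i p) : ℝ) : ℂ) := by
      intro p
      rw [hAdef]
      exact Finset.sum_congr rfl fun i _ => Complex.mul_conj (w i p)
    rw [Finset.sum_congr rfl fun p _ => h1 p, Finset.sum_comm]
    rw [hσdef]
    push_cast
    refine Finset.sum_congr rfl fun i _ => ?_
    rw [← hwnorm i]
    push_cast
    rfl
  -- diag indicator sums for w
  have hwdiagsum : ∀ i, ∑ p : Fin m × Fin m, (if p.1 = p.2 then (1:ℂ) else 0) * w i p
      = ((tv U i ^ ((1:ℝ)/4) : ℝ) : ℂ) := by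
    intro i
    rw [Fintype.sum_prod_type]
    have h1 : ∀ k : Fin m, ∑ l : Fin m, (if k = l then (1:ℂ) else 0) * w i (k, l)
        = w i (k, k) := by
      intro k
      simp
    rw [Finset.sum_congr rfl fun k _ => h1 k]
    have h2 : ∀ k : Fin m, w i (k, k)
        = ((tv U i ^ (-(3:ℝ)/4) : ℝ) : ℂ) * ((Complex.normSq (U k i) : ℝ) : ℂ) := by
      intro k
      rw [hwdef]
      simp [Complex.mul_conj]
    rw [Finset.sum_congr rfl fun k _ => h2 k, ← Finset.mul_sum]
    rw [← rpow_aux2 (tv_nonneg U i)]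
    push_cast [tv]
    ring
  -- (c) phi-sum of A
  have hAphi : ∑ p : Fin m × Fin m, ∑ q : Fin m × Fin m,
      (if p.1 = p.2 then (1:ℂ) else 0) * (if q.1 = q.2 then (1:ℂ) else 0) * A p q = ((σ : ℝ) : ℂ) := by
    have h1 : ∀ p q, (if p.1 = p.2 then (1:ℂ) else 0) * (if q.1 = q.2 then (1:ℂ) else 0) * A p q
        = ∑ i, ((if p.1 = p.2 then (1:ℂ) else 0) * w i p)
            * (starRingEnd ℂ) ((if q.1 = q.2 then (1:ℂ) else 0) * w i q) := by
      intro p q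
      rw [hAdef, Finset.mul_sum]
      refine Finset.sum_congr rfl fun i _ => ?_
      split_ifs <;> simp
    simp only [h1]
    rw [Finset.sum_congr rfl fun p _ => Finset.sum_comm, Finset.sum_comm]
    have h2 : ∀ i, ∑ p : Fin m × Fin m, ∑ q : Fin m × Fin m,
        ((if p.1 = p.2 then (1:ℂ) else 0) * w i p)
          * (starRingEnd ℂ) ((if q.1 = q.2 then (1:ℂ) else 0) * w i q)
        = ((Real.sqrt (tv U i) : ℝ) : ℂ) := by
      intro i
      have e1 : ∀ p : Fin m × Fin m, ∑ q : Fin m × Fin m,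
          ((if p.1 = p.2 then (1:ℂ) else 0) * w i p)
            * (starRingEnd ℂ) ((if q.1 = q.2 then (1:ℂ) else 0) * w i q)
          = ((if p.1 = p.2 then (1:ℂ) else 0) * w i p)
            * (starRingEnd ℂ) (∑ q : Fin m × Fin m, (if q.1 = q.2 then (1:ℂ) else 0) * w i q) := by
        intro p
        rw [map_sum, Finset.mul_sum]
      rw [Finset.sum_congr rfl fun p _ => e1 p, ← Finset.sum_mul, hwdiagsum i,
        Complex.conj_ofReal, ← Complex.ofReal_mul, ← rpow_aux3 (tv_nonneg U i), sq]
    rw [Finset.sum_congr rfl fun i _ => h2 i]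
    rw [hσdef]
    push_cast
    rfl
  -- (d) Frobenius norm of A
  have hz : ∀ i j, ∑ q : Fin m × Fin m, (starRingEnd ℂ) (w i q) * w j q
      = (((tv U i ^ (-(3:ℝ)/4)) * (tv U j ^ (-(3:ℝ)/4)) * ‖Gm U i j‖^2 : ℝ) : ℂ) := by
    intro i j
    have e1 : ∀ q : Fin m × Fin m, (starRingEnd ℂ) (w i q) * w j q
        = ((tv U i ^ (-(3:ℝ)/4) * tv U j ^ (-(3:ℝ)/4) : ℝ) : ℂ)
          * (((starRingEnd ℂ) (U q.1 i) * U q.1 j) * (U q.2 i * (starRingEnd ℂ) (U q.2 j))) := by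
      intro q
      rw [hwdef]
      simp only [map_mul, Complex.conj_conj, Complex.conj_ofReal]
      push_cast
      ring
    rw [Finset.sum_congr rfl fun q _ => e1 q, ← Finset.mul_sum, Fintype.sum_prod_type]
    have e2 : ∑ k, ∑ l, ((starRingEnd ℂ) (U k i) * U k j) * (U l i * (starRingEnd ℂ) (U l j))
        = (∑ k, (starRingEnd ℂ) (U k i) * U k j) * (∑ l, U l i * (starRingEnd ℂ) (U l j)) := by
      rw [Finset.sum_mul_sum]
    have e3 : (∑ l, U l i * (starRingEnd ℂ) (U l j)) = (starRingEnd ℂ) (Gm U i j) := by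
      rw [Gm, map_sum]
      refine Finset.sum_congr rfl fun l _ => ?_
      simp only [map_mul, Complex.conj_conj]
      try ring
    have e4 : (∑ k, (starRingEnd ℂ) (U k i) * U k j) = Gm U i j := rfl
    rw [e2, e3, e4, Complex.mul_conj, Complex.normSq_eq_norm_sq]
    push_cast
    ring
  have hAF : ∑ p : Fin m × Fin m, ∑ q : Fin m × Fin m, Complex.normSq (A p q)
      = ∑ i, ∑ j, ((tv U i ^ (-(3:ℝ)/4)) * (tv U j ^ (-(3:ℝ)/4)) * ‖Gm U i j‖^2)^2 := by
    have hc : ((∑ p : Fin m × Fin m, ∑ q : Fin m × Fin m, Complex.normSq (A p q) : ℝ) : ℂ)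
        = ∑ p : Fin m × Fin m, ∑ q : Fin m × Fin m, A p q * (starRingEnd ℂ) (A p q) := by
      push_cast
      exact Finset.sum_congr rfl fun p _ => Finset.sum_congr rfl fun q _ =>
        (Complex.mul_conj (A p q)).symm
    have step1 : ∀ p q : Fin m × Fin m, A p q * (starRingEnd ℂ) (A p q)
        = ∑ i, ∑ j, (w i p * (starRingEnd ℂ) (w j p)) * ((starRingEnd ℂ) (w i q) * w j q) := by
      intro p q
      rw [hAdef]
      simp only
      rw [map_sum, Finset.sum_mul_sum]
      refine Finset.sum_congr rfl fun i _ => Finset.sum_congr rfl fun j _ => ?_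
      simp only [map_mul, Complex.conj_conj]
      try ring
    have step2 : ∑ p : Fin m × Fin m, ∑ q : Fin m × Fin m, A p q * (starRingEnd ℂ) (A p q)
        = ∑ i, ∑ j, (∑ p : Fin m × Fin m, w i p * (starRingEnd ℂ) (w j p))
            * (∑ q : Fin m × Fin m, (starRingEnd ℂ) (w i q) * w j q) := by
      rw [Finset.sum_congr rfl fun p _ => Finset.sum_congr rfl fun q _ => step1 p q]
      rw [sum_swap4]
      refine Finset.sum_congr rfl fun i _ => Finset.sum_congr rfl fun j _ => ?_
      rw [Finset.sum_mul_sum]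
    have step3 : ∀ i j, (∑ p : Fin m × Fin m, w i p * (starRingEnd ℂ) (w j p))
        = (starRingEnd ℂ) (∑ q : Fin m × Fin m, (starRingEnd ℂ) (w i q) * w j q) := by
      intro i j
      rw [map_sum]
      refine Finset.sum_congr rfl fun q _ => ?_
      simp only [map_mul, Complex.conj_conj]
      try ring
    have hc2 : ((∑ p : Fin m × Fin m, ∑ q : Fin m × Fin m, Complex.normSq (A p q) : ℝ) : ℂ)
        = ((∑ i, ∑ j, ((tv U i ^ (-(3:ℝ)/4)) * (tv U j ^ (-(3:ℝ)/4)) * ‖Gm U i j‖^2)^2 : ℝ) : ℂ) := by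
      rw [hc, step2]
      rw [Finset.sum_congr rfl fun i _ => Finset.sum_congr rfl fun j _ => by
        rw [step3 i j, hz i j, Complex.conj_ofReal, ← Complex.ofReal_mul, ← sq]]
      push_cast
      rfl
    exact_mod_cast hc2
  -- (e) pointwise bound and assembly
  have hd0 : (0:ℝ) < (m:ℝ)^2 + m := by
    have : (1:ℝ) ≤ m := by exact_mod_cast hm
    nlinarith
  set d : (Fin m × Fin m) → (Fin m × Fin m) → ℝ :=
    fun p q => (if p = q then ρ else 0) + (if p.1 = p.2 ∧ q.1 = q.2 then ρ else 0) with hddef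
  have hpoint : ∀ p q : Fin m × Fin m,
      2 * d p q * (A p q).re - d p q ^ 2 ≤ Complex.normSq (A p q) := by
    intro p q
    rw [Complex.normSq_apply]
    nlinarith [sq_nonneg ((A p q).re - d p q), sq_nonneg (A p q).im]
  have hsum := Finset.sum_le_sum fun p (_ : p ∈ Finset.univ) =>
    Finset.sum_le_sum fun q (_ : q ∈ Finset.univ) => hpoint p q
  -- compute the lower sum
  have hexpand : ∀ p q : Fin m × Fin m, 2 * d p q * (A p q).re - d p q ^ 2
      = 2*ρ*((if p = q then (1:ℝ) else 0) * (A p q).re)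
        + 2*ρ*((if p.1 = p.2 ∧ q.1 = q.2 then (1:ℝ) else 0) * (A p q).re)
        - ((if p = q then (1:ℝ) else 0)*ρ^2 + (if p.1 = p.2 ∧ q.1 = q.2 then (1:ℝ) else 0)*ρ^2
            + 2*(if p = q ∧ p.1 = p.2 then (1:ℝ) else 0)*ρ^2) := by
    intro p q
    rw [hddef]
    simp only
    by_cases h1 : p = q
    · subst h1
      by_cases h2 : p.1 = p.2 <;> simp [h2] <;> ring
    · by_cases h2 : p.1 = p.2 <;> by_cases h3 : q.1 = q.2 <;>
        simp [h1, h2, h3] <;> ring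
  have S1 : ∑ p : Fin m × Fin m, ∑ q : Fin m × Fin m,
      (if p = q then (1:ℝ) else 0) * (A p q).re = σ := by
    have e1 : ∀ p : Fin m × Fin m, ∑ q : Fin m × Fin m,
        (if p = q then (1:ℝ) else 0) * (A p q).re = (A p p).re := by
      intro p
      rw [Finset.sum_congr rfl fun q _ => by rw [ite_mul, one_mul, zero_mul]]
      exact Finset.sum_ite_eq _ p (fun q => (A p q).re) |>.trans (by simp)
    rw [Finset.sum_congr rfl fun p _ => e1 p]
    have := congrArg Complex.re hAdiag
    rw [Complex.re_sum] at this
    simp only [Complex.ofReal_re] at this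
    exact this
  have S2 : ∑ p : Fin m × Fin m, ∑ q : Fin m × Fin m,
      (if p.1 = p.2 ∧ q.1 = q.2 then (1:ℝ) else 0) * (A p q).re = σ := by
    have := congrArg Complex.re hAphi
    rw [Complex.re_sum] at this
    rw [Finset.sum_congr rfl fun p _ => Complex.re_sum _ _] at this
    simp only [Complex.ofReal_re] at this
    rw [← this]
    refine Finset.sum_congr rfl fun p _ => Finset.sum_congr rfl fun q _ => ?_
    by_cases h2 : p.1 = p.2 <;> by_cases h3 : q.1 = q.2 <;>
      simp only [h2, h3, if_true, if_false, and_self, true_and, and_true, false_and, and_false,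
        ite_true, ite_false, one_mul, zero_mul, mul_one, mul_zero, Complex.zero_re]
  have T1 : ∑ p : Fin m × Fin m, ∑ q : Fin m × Fin m,
      (if p = q then (1:ℝ) else 0) * ρ^2 = (m:ℝ)^2 * ρ^2 := by
    have e1 : ∀ p : Fin m × Fin m, ∑ q : Fin m × Fin m,
        (if p = q then (1:ℝ) else 0) * ρ^2 = ρ^2 := by
      intro p
      rw [Finset.sum_congr rfl fun q _ => by rw [ite_mul, one_mul, zero_mul]]
      simp
    rw [Finset.sum_congr rfl fun p _ => e1 p]
    rw [Finset.sum_const, Finset.card_univ]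
    simp only [Fintype.card_prod, Fintype.card_fin, nsmul_eq_mul]
    push_cast
    ring
  have hdiagcount : ∑ p : Fin m × Fin m, (if p.1 = p.2 then (1:ℝ) else 0) = m := by
    rw [Fintype.sum_prod_type]
    have : ∀ k : Fin m, ∑ l : Fin m, (if k = l then (1:ℝ) else 0) = 1 := by
      intro k
      simp
    rw [Finset.sum_congr rfl fun k _ => this k]
    simp
  have T2 : ∑ p : Fin m × Fin m, ∑ q : Fin m × Fin m,
      (if p.1 = p.2 ∧ q.1 = q.2 then (1:ℝ) else 0) * ρ^2 = (m:ℝ)^2 * ρ^2 := by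
    have e1 : ∀ p q : Fin m × Fin m, (if p.1 = p.2 ∧ q.1 = q.2 then (1:ℝ) else 0) * ρ^2
        = ((if p.1 = p.2 then (1:ℝ) else 0) * (if q.1 = q.2 then (1:ℝ) else 0)) * ρ^2 := by
      intro p q
      by_cases h2 : p.1 = p.2 <;> by_cases h3 : q.1 = q.2 <;> simp [h2, h3]
    rw [Finset.sum_congr rfl fun p _ => Finset.sum_congr rfl fun q _ => e1 p q]
    have e2 : ∀ p : Fin m × Fin m, ∑ q : Fin m × Fin m,
        ((if p.1 = p.2 then (1:ℝ) else 0) * (if q.1 = q.2 then (1:ℝ) else 0)) * ρ^2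
        = (if p.1 = p.2 then (1:ℝ) else 0) * ((m:ℝ) * ρ^2) := by
      intro p
      rw [Finset.sum_congr rfl fun q _ => by rw [mul_assoc]]
      rw [← Finset.mul_sum, ← Finset.sum_mul, hdiagcount]
    rw [Finset.sum_congr rfl fun p _ => e2 p, ← Finset.sum_mul, hdiagcount]
    ring
  have T3 : ∑ p : Fin m × Fin m, ∑ q : Fin m × Fin m,
      2*(if p = q ∧ p.1 = p.2 then (1:ℝ) else 0)*ρ^2 = 2*(m:ℝ) * ρ^2 := by
    have e1 : ∀ p : Fin m × Fin m, ∑ q : Fin m × Fin m,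
        2*(if p = q ∧ p.1 = p.2 then (1:ℝ) else 0)*ρ^2
        = 2*(if p.1 = p.2 then (1:ℝ) else 0)*ρ^2 := by
      intro p
      have : ∀ q : Fin m × Fin m, 2*(if p = q ∧ p.1 = p.2 then (1:ℝ) else 0)*ρ^2
          = if p = q then 2*(if p.1 = p.2 then (1:ℝ) else 0)*ρ^2 else 0 := by
        intro q
        by_cases h1 : p = q
        · subst h1
          simp
        · simp [h1]
      rw [Finset.sum_congr rfl fun q _ => this q]
      exact Finset.sum_ite_eq _ p _ |>.trans (by simp)
    rw [Finset.sum_congr rfl fun p _ => e1 p]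
    rw [Finset.sum_congr rfl fun p _ => by rw [mul_comm (2:ℝ) _, mul_assoc]]
    rw [← Finset.sum_mul, hdiagcount]
    ring
  -- put everything together
  rw [Finset.sum_congr rfl (fun p _ => Finset.sum_congr rfl fun q _ => hexpand p q)] at hsum
  simp only [Finset.sum_sub_distrib, Finset.sum_add_distrib, ← Finset.mul_sum] at hsum
  rw [S1, S2, T1, T2, T3, hAF] at hsum
  calc 2*σ^2/((m:ℝ)^2+m) = 2*ρ*σ + 2*ρ*σ - ((m:ℝ)^2*ρ^2 + (m:ℝ)^2*ρ^2 + 2*(m:ℝ)*ρ^2) := by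
        rw [hρdef]
        field_simp
        ring
    _ ≤ ∑ i, ∑ j, ((tv U i ^ (-(3:ℝ)/4)) * (tv U j ^ (-(3:ℝ)/4)) * ‖Gm U i j‖^2)^2 := hsum

private lemma quartic_ineq (r u : ℝ) (hr : 1 < r) (hu0 : 0 ≤ u) (hu1 : u ≤ 1) :
    u ≤ (r*(r^2+2*r+3)/(2*(r+1)^2)) * u^2 - (r^3/(2*(r+1)^2)) * u^4 + (r+2)/(2*(r+1)^2) := by
  have h1 : (0:ℝ) < (r+1)^2 := by positivity
  have key : (r*(r^2+2*r+3)/(2*(r+1)^2)) * u^2 - (r^3/(2*(r+1)^2)) * u^4 + (r+2)/(2*(r+1)^2) - u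
      = (r*u-1)^2*((1-u)*(r*u+r+2)) / (2*(r+1)^2) := by
    field_simp
    ring
  have h6 : 0 ≤ (r*u-1)^2*((1-u)*(r*u+r+2)) / (2*(r+1)^2) := by
    apply div_nonneg _ (by positivity)
    exact mul_nonneg (sq_nonneg _) (mul_nonneg (by linarith) (by nlinarith))
  linarith [key, h6]

private lemma scalar_id (m : ℕ) (r : ℝ) (hm : 1 < m) (hr2 : r^2 = (m:ℝ)+1) (hr : 1 < r) :
    (r*(r^2+2*r+3)/(2*(r+1)^2)) + ((r+2)/(2*(r+1)^2) - 2*(r^3/(2*(r+1)^2))/((m:ℝ)^2+m)) * m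
      = (1 + ((m:ℝ)-1)*r)/m := by
  have hm0 : (0:ℝ) < m := by positivity
  have hmr : (m:ℝ) = r^2 - 1 := by rw [hr2]; ring
  rw [hmr]
  have h1 : r + 1 ≠ 0 := by nlinarith
  have h2 : r - 1 ≠ 0 := by intro h; nlinarith [h]
  have h3 : r ≠ 0 := by nlinarith
  have h4 : r^2 - 1 ≠ 0 := by intro h; nlinarith
  have h5 : (r^2-1)^2 + (r^2-1) ≠ 0 := by
    have : (r^2-1)^2 + (r^2-1) = (r^2-1)*r^2 := by ring
    rw [this]; exact mul_ne_zero h4 (pow_ne_zero 2 h3)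
  field_simp
  ring

private lemma chi_nonneg (m : ℕ) (r : ℝ) (hm : 1 < m) (hr2 : r^2 = (m:ℝ)+1) (hr : 1 < r) :
    0 ≤ (r+2)/(2*(r+1)^2) - 2*(r^3/(2*(r+1)^2))/((m:ℝ)^2+m) := by
  have hm2 : (2:ℝ) ≤ m := by exact_mod_cast hm
  have hr3 : (3:ℝ) ≤ r^2 := by rw [hr2]; linarith
  have hmr : (m:ℝ)^2 + m = (r^2-1)*r^2 := by
    have : (m:ℝ) = r^2 - 1 := by rw [hr2]; ring
    rw [this]; ring
  rw [hmr, sub_nonneg]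
  have h1 : (r:ℝ) + 1 ≠ 0 := by nlinarith
  have h3 : (r:ℝ) ≠ 0 := by nlinarith
  have h4 : r^2 - 1 ≠ 0 := by nlinarith
  have he : 2*(r^3/(2*(r+1)^2))/((r^2-1)*r^2) = r/((r+1)^2*(r^2-1)) := by
    field_simp
  rw [he, div_le_div_iff₀ (by nlinarith) (by positivity)]
  nlinarith [mul_nonneg (by nlinarith : (0:ℝ) ≤ r) (by nlinarith : (0:ℝ) ≤ r^2-3), sq_nonneg (r+1)]


private lemma lem_col (U : Matrix (Fin m) (Fin N) ℂ) (hU : U * U.conjTranspose = 1)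
    (j : Fin N) : ∑ i, ‖Gm U i j‖^2 = tv U j := by
  rw [← lem_row U hU j]
  refine Finset.sum_congr rfl fun i _ => ?_
  rw [lem_Gsym U j i]
  simp

private lemma pair_ineq (r gi gj B : ℝ) (hr1 : 1 < r) (hgi : 0 < gi) (hgj : 0 < gj)
    (hB0 : 0 ≤ B) (hBle : B ≤ gi * gj) :
    B ≤ (r*(r^2+2*r+3)/(2*(r+1)^2))/2 * (B^2 * (gi^2)⁻¹)
        + (r*(r^2+2*r+3)/(2*(r+1)^2))/2 * (B^2 * (gj^2)⁻¹)
        - (r^3/(2*(r+1)^2)) * ((gi^3)⁻¹ * (gj^3)⁻¹ * B^4)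
        + ((r+2)/(2*(r+1)^2)) * (gi * gj) := by
  have ha0 : 0 < r*(r^2+2*r+3)/(2*(r+1)^2) := by
    apply div_pos (by nlinarith) (by nlinarith)
  have hu0 : 0 ≤ B / (gi * gj) := div_nonneg hB0 (by positivity)
  have hu1 : B / (gi * gj) ≤ 1 := (div_le_one (by positivity)).2 hBle
  have hq := quartic_ineq r (B / (gi * gj)) hr1 hu0 hu1
  have hq' := mul_le_mul_of_nonneg_right hq (le_of_lt (mul_pos hgi hgj))
  have hBu : B / (gi * gj) * (gi * gj) = B := by field_simp
  rw [hBu] at hq'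
  have e1 : (B / (gi * gj))^2 * (gi * gj) = B^2 * (gi * gj)⁻¹ := by
    field_simp
  have e2 : (B / (gi * gj))^4 * (gi * gj) = (gi^3)⁻¹ * (gj^3)⁻¹ * B^4 := by
    field_simp
  rw [show (r * (r ^ 2 + 2 * r + 3) / (2 * (r + 1) ^ 2) * (B / (gi * gj)) ^ 2 -
          r ^ 3 / (2 * (r + 1) ^ 2) * (B / (gi * gj)) ^ 4 +
        (r + 2) / (2 * (r + 1) ^ 2)) * (gi * gj)
      = r * (r ^ 2 + 2 * r + 3) / (2 * (r + 1) ^ 2) * ((B / (gi * gj)) ^ 2 * (gi * gj))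
        - r ^ 3 / (2 * (r + 1) ^ 2) * ((B / (gi * gj)) ^ 4 * (gi * gj))
        + (r + 2) / (2 * (r + 1) ^ 2) * (gi * gj) from by ring, e1, e2] at hq'
  -- hq' : B ≤ a * (B^2 * (gi*gj)⁻¹) - β * ((gi^3)⁻¹(gj^3)⁻¹B^4) + c*(gi*gj)
  have key : (r*(r^2+2*r+3)/(2*(r+1)^2)) * (B^2 * (gi * gj)⁻¹)
      ≤ (r*(r^2+2*r+3)/(2*(r+1)^2))/2 * (B^2 * (gi^2)⁻¹)
        + (r*(r^2+2*r+3)/(2*(r+1)^2))/2 * (B^2 * (gj^2)⁻¹) := by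
    have hgg : (gi * gj)⁻¹ ≤ ((gi^2)⁻¹ + (gj^2)⁻¹)/2 := by
      have h1 : (gi * gj)⁻¹ = gi⁻¹ * gj⁻¹ := by rw [mul_inv]
      have h2 : (gi^2)⁻¹ = gi⁻¹^2 := by rw [inv_pow]
      have h3 : (gj^2)⁻¹ = gj⁻¹^2 := by rw [inv_pow]
      rw [h1, h2, h3]
      nlinarith [sq_nonneg (gi⁻¹ - gj⁻¹)]
    calc (r*(r^2+2*r+3)/(2*(r+1)^2)) * (B^2 * (gi * gj)⁻¹)
        ≤ (r*(r^2+2*r+3)/(2*(r+1)^2)) * (B^2 * (((gi^2)⁻¹ + (gj^2)⁻¹)/2)) := by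
          apply mul_le_mul_of_nonneg_left _ (le_of_lt ha0)
          exact mul_le_mul_of_nonneg_left hgg (sq_nonneg B)
      _ = (r*(r^2+2*r+3)/(2*(r+1)^2))/2 * (B^2 * (gi^2)⁻¹)
          + (r*(r^2+2*r+3)/(2*(r+1)^2))/2 * (B^2 * (gj^2)⁻¹) := by ring
  linarith [hq', key]

private lemma lem_key (hm : 1 < m) (U : Matrix (Fin m) (Fin N) ℂ)
    (hU : U * U.conjTranspose = 1) :
    ∑ i, ∑ j, ‖(U.conjTranspose * U) i j‖
      ≤ (N:ℝ) * ((1 + ((m:ℝ)-1) * Real.sqrt ((m:ℝ)+1)) / m) := by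
  set r := Real.sqrt ((m:ℝ)+1) with hrdef
  have hr2 : r^2 = (m:ℝ)+1 := Real.sq_sqrt (by positivity)
  have hm2 : (2:ℝ) ≤ (m:ℝ) := by exact_mod_cast hm
  have hr1 : 1 < r := by nlinarith [Real.sqrt_nonneg ((m:ℝ)+1)]
  have hr0 : 0 < r := lt_trans zero_lt_one hr1
  have ha0 : 0 < r*(r^2+2*r+3)/(2*(r+1)^2) := by
    apply div_pos (by nlinarith) (by nlinarith)
  have hβ0 : 0 < r^3/(2*(r+1)^2) := by
    apply div_pos (by nlinarith) (by nlinarith)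
  have hc0 : 0 < (r+2)/(2*(r+1)^2) := by
    apply div_pos (by nlinarith) (by nlinarith)
  -- per-pair inequality
  have hP : ∀ i j, ‖Gm U i j‖
      ≤ (r*(r^2+2*r+3)/(2*(r+1)^2))/2 * (‖Gm U i j‖^2 * (tv U i)⁻¹)
        + (r*(r^2+2*r+3)/(2*(r+1)^2))/2 * (‖Gm U i j‖^2 * (tv U j)⁻¹)
        - (r^3/(2*(r+1)^2)) * ((tv U i ^ (-(3:ℝ)/4)) * (tv U j ^ (-(3:ℝ)/4)) * ‖Gm U i j‖^2)^2
        + ((r+2)/(2*(r+1)^2)) * (Real.sqrt (tv U i) * Real.sqrt (tv U j)) := by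
    intro i j
    rcases eq_or_lt_of_le (tv_nonneg U i) with h0i | hti
    · have hz : Gm U i j = 0 := lem_zero U h0i.symm j
      rw [hz, ← h0i]
      simp
    rcases eq_or_lt_of_le (tv_nonneg U j) with h0j | htj
    · have hz : Gm U i j = 0 := by
        have h1 : Gm U j i = 0 := lem_zero U h0j.symm i
        have h2 := lem_Gsym U i j
        rw [h1] at h2
        exact star_eq_zero.mp h2.symm
      rw [hz, ← h0j]
      simp
    · have hrp : ∀ x : ℝ, 0 ≤ x → (x ^ (-(3:ℝ)/4))^2 = ((Real.sqrt x)^3)⁻¹ := by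
        intro x hx
        rw [← Real.rpow_natCast (x ^ (-(3:ℝ)/4)) 2, ← Real.rpow_mul hx]
        rw [Real.sqrt_eq_rpow, ← Real.rpow_natCast (x ^ ((1:ℝ)/2)) 3, ← Real.rpow_mul hx]
        rw [← Real.rpow_neg hx]
        norm_num
      have hgi : 0 < Real.sqrt (tv U i) := Real.sqrt_pos.2 hti
      have hgj : 0 < Real.sqrt (tv U j) := Real.sqrt_pos.2 htj
      have hti' : tv U i = Real.sqrt (tv U i)^2 := (Real.sq_sqrt (le_of_lt hti)).symm
      have htj' : tv U j = Real.sqrt (tv U j)^2 := (Real.sq_sqrt (le_of_lt htj)).symm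
      have e3 : ((tv U i ^ (-(3:ℝ)/4)) * (tv U j ^ (-(3:ℝ)/4)) * ‖Gm U i j‖^2)^2
          = (Real.sqrt (tv U i)^3)⁻¹ * (Real.sqrt (tv U j)^3)⁻¹ * ‖Gm U i j‖^4 := by
        rw [mul_pow, mul_pow, hrp _ (tv_nonneg U i), hrp _ (tv_nonneg U j)]
        ring
      rw [e3]
      nth_rewrite 1 [hti']
      nth_rewrite 1 [htj']
      exact pair_ineq r (Real.sqrt (tv U i)) (Real.sqrt (tv U j)) (‖Gm U i j‖) hr1 hgi hgj
        (norm_nonneg _) (lem_CS U i j)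
  have hS : ∑ i, ∑ j, ‖(U.conjTranspose * U) i j‖ = ∑ i, ∑ j, ‖Gm U i j‖ :=
    Finset.sum_congr rfl fun i _ => Finset.sum_congr rfl fun j _ => by rw [lem_G_apply]
  rw [hS]
  set σ : ℝ := ∑ i, Real.sqrt (tv U i) with hσdef
  have hsum := Finset.sum_le_sum fun i (_ : i ∈ Finset.univ) =>
    Finset.sum_le_sum fun j (_ : j ∈ Finset.univ) => hP i j
  have hA : ∑ i, ∑ j, ((r*(r^2+2*r+3)/(2*(r+1)^2))/2 * (‖Gm U i j‖^2 * (tv U i)⁻¹))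
      = (r*(r^2+2*r+3)/(2*(r+1)^2))/2 * ∑ i, tv U i * (tv U i)⁻¹ := by
    have inner : ∀ i, ∑ j, ((r*(r^2+2*r+3)/(2*(r+1)^2))/2 * (‖Gm U i j‖^2 * (tv U i)⁻¹))
        = (r*(r^2+2*r+3)/(2*(r+1)^2))/2 * (tv U i * (tv U i)⁻¹) := by
      intro i
      rw [← Finset.mul_sum, ← Finset.sum_mul, lem_row U hU i]
    rw [Finset.sum_congr rfl fun i _ => inner i, ← Finset.mul_sum]
  have hB : ∑ i, ∑ j, ((r*(r^2+2*r+3)/(2*(r+1)^2))/2 * (‖Gm U i j‖^2 * (tv U j)⁻¹))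
      = (r*(r^2+2*r+3)/(2*(r+1)^2))/2 * ∑ j, tv U j * (tv U j)⁻¹ := by
    rw [Finset.sum_comm]
    have inner : ∀ j, ∑ i, ((r*(r^2+2*r+3)/(2*(r+1)^2))/2 * (‖Gm U i j‖^2 * (tv U j)⁻¹))
        = (r*(r^2+2*r+3)/(2*(r+1)^2))/2 * (tv U j * (tv U j)⁻¹) := by
      intro j
      rw [← Finset.mul_sum, ← Finset.sum_mul, lem_col U hU j]
    rw [Finset.sum_congr rfl fun j _ => inner j, ← Finset.mul_sum]
  have hD : ∑ i, ∑ j, (((r+2)/(2*(r+1)^2)) * (Real.sqrt (tv U i) * Real.sqrt (tv U j)))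
      = ((r+2)/(2*(r+1)^2)) * σ^2 := by
    have inner : ∀ i, ∑ j, (((r+2)/(2*(r+1)^2)) * (Real.sqrt (tv U i) * Real.sqrt (tv U j)))
        = ((r+2)/(2*(r+1)^2)) * (Real.sqrt (tv U i) * σ) := by
      intro i
      rw [← Finset.mul_sum, ← Finset.mul_sum]
    rw [Finset.sum_congr rfl fun i _ => inner i, ← Finset.mul_sum, ← Finset.sum_mul]
    rw [← hσdef]
    ring
  have hT : ∑ i, tv U i * (tv U i)⁻¹ ≤ (N:ℝ) := by
    calc ∑ i, tv U i * (tv U i)⁻¹ ≤ ∑ i : Fin N, (1:ℝ) := by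
          refine Finset.sum_le_sum fun i _ => ?_
          rcases eq_or_lt_of_le (tv_nonneg U i) with h0 | h0
          · rw [← h0]
            norm_num
          · rw [mul_inv_cancel₀ (ne_of_gt h0)]
      _ = (N:ℝ) := by simp
  have hW := lem_welch U (by omega : 0 < m)
  have hCS2 : σ^2 ≤ (N:ℝ) * m := by
    have h := Finset.sum_mul_sq_le_sq_mul_sq Finset.univ (fun _ : Fin N => (1:ℝ))
      (fun i => Real.sqrt (tv U i))
    have h1 : ∑ i, (1:ℝ) * Real.sqrt (tv U i) = σ := by
      rw [hσdef]
      exact Finset.sum_congr rfl fun i _ => one_mul _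
    have h2 : ∑ _i : Fin N, ((1:ℝ))^2 = (N:ℝ) := by simp
    have h3 : ∑ i, (Real.sqrt (tv U i))^2 = (m:ℝ) := by
      rw [Finset.sum_congr rfl fun i _ => Real.sq_sqrt (tv_nonneg U i), lem_tsum U hU]
    calc σ^2 = (∑ i, (1:ℝ) * Real.sqrt (tv U i))^2 := by rw [h1]
      _ ≤ (∑ _i : Fin N, ((1:ℝ))^2) * ∑ i, (Real.sqrt (tv U i))^2 := h
      _ = (N:ℝ) * m := by rw [h2, h3]
  have hsplit : ∑ i, ∑ j,
      ((r*(r^2+2*r+3)/(2*(r+1)^2))/2 * (‖Gm U i j‖^2 * (tv U i)⁻¹)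
        + (r*(r^2+2*r+3)/(2*(r+1)^2))/2 * (‖Gm U i j‖^2 * (tv U j)⁻¹)
        - (r^3/(2*(r+1)^2)) * ((tv U i ^ (-(3:ℝ)/4)) * (tv U j ^ (-(3:ℝ)/4)) * ‖Gm U i j‖^2)^2
        + ((r+2)/(2*(r+1)^2)) * (Real.sqrt (tv U i) * Real.sqrt (tv U j)))
      = (r*(r^2+2*r+3)/(2*(r+1)^2))/2 * (∑ i, tv U i * (tv U i)⁻¹)
        + (r*(r^2+2*r+3)/(2*(r+1)^2))/2 * (∑ j, tv U j * (tv U j)⁻¹)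
        - (r^3/(2*(r+1)^2)) * (∑ i, ∑ j, ((tv U i ^ (-(3:ℝ)/4)) * (tv U j ^ (-(3:ℝ)/4)) * ‖Gm U i j‖^2)^2)
        + ((r+2)/(2*(r+1)^2)) * σ^2 := by
    simp only [Finset.sum_add_distrib, Finset.sum_sub_distrib]
    have hC : ∑ i, ∑ j, ((r^3/(2*(r+1)^2))
          * ((tv U i ^ (-(3:ℝ)/4)) * (tv U j ^ (-(3:ℝ)/4)) * ‖Gm U i j‖^2)^2)
        = (r^3/(2*(r+1)^2))
          * ∑ i, ∑ j, ((tv U i ^ (-(3:ℝ)/4)) * (tv U j ^ (-(3:ℝ)/4)) * ‖Gm U i j‖^2)^2 := by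
      simp only [← Finset.mul_sum]
    rw [hA, hB, hD, hC]
  have hWb : (r^3/(2*(r+1)^2)) * (2*σ^2/((m:ℝ)^2+m))
      ≤ (r^3/(2*(r+1)^2)) * (∑ i, ∑ j, ((tv U i ^ (-(3:ℝ)/4)) * (tv U j ^ (-(3:ℝ)/4)) * ‖Gm U i j‖^2)^2) :=
    mul_le_mul_of_nonneg_left hW (le_of_lt hβ0)
  have hTa : (r*(r^2+2*r+3)/(2*(r+1)^2))/2 * (∑ i, tv U i * (tv U i)⁻¹)
      ≤ (r*(r^2+2*r+3)/(2*(r+1)^2))/2 * (N:ℝ) :=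
    mul_le_mul_of_nonneg_left hT (by positivity)
  have hχ := chi_nonneg m r hm hr2 hr1
  have hχb : ((r+2)/(2*(r+1)^2) - 2*(r^3/(2*(r+1)^2))/((m:ℝ)^2+m)) * σ^2
      ≤ ((r+2)/(2*(r+1)^2) - 2*(r^3/(2*(r+1)^2))/((m:ℝ)^2+m)) * ((N:ℝ)*m) :=
    mul_le_mul_of_nonneg_left hCS2 hχ
  have hid := scalar_id m r hm hr2 hr1
  calc ∑ i, ∑ j, ‖Gm U i j‖
      ≤ ∑ i, ∑ j,
        ((r*(r^2+2*r+3)/(2*(r+1)^2))/2 * (‖Gm U i j‖^2 * (tv U i)⁻¹)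
          + (r*(r^2+2*r+3)/(2*(r+1)^2))/2 * (‖Gm U i j‖^2 * (tv U j)⁻¹)
          - (r^3/(2*(r+1)^2)) * ((tv U i ^ (-(3:ℝ)/4)) * (tv U j ^ (-(3:ℝ)/4)) * ‖Gm U i j‖^2)^2
          + ((r+2)/(2*(r+1)^2)) * (Real.sqrt (tv U i) * Real.sqrt (tv U j))) := hsum
    _ = (r*(r^2+2*r+3)/(2*(r+1)^2))/2 * (∑ i, tv U i * (tv U i)⁻¹)
        + (r*(r^2+2*r+3)/(2*(r+1)^2))/2 * (∑ j, tv U j * (tv U j)⁻¹)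
        - (r^3/(2*(r+1)^2)) * (∑ i, ∑ j, ((tv U i ^ (-(3:ℝ)/4)) * (tv U j ^ (-(3:ℝ)/4)) * ‖Gm U i j‖^2)^2)
        + ((r+2)/(2*(r+1)^2)) * σ^2 := hsplit
    _ ≤ (r*(r^2+2*r+3)/(2*(r+1)^2)) * (N:ℝ)
        + ((r+2)/(2*(r+1)^2) - 2*(r^3/(2*(r+1)^2))/((m:ℝ)^2+m)) * σ^2 := by
        have heq : (r^3/(2*(r+1)^2)) * (2*σ^2/((m:ℝ)^2+m))
            = (2*(r^3/(2*(r+1)^2))/((m:ℝ)^2+m)) * σ^2 := by ring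
        linarith [hWb, hTa, heq]
    _ ≤ (r*(r^2+2*r+3)/(2*(r+1)^2)) * (N:ℝ)
        + ((r+2)/(2*(r+1)^2) - 2*(r^3/(2*(r+1)^2))/((m:ℝ)^2+m)) * ((N:ℝ)*m) := by
        linarith [hχb]
    _ = (N:ℝ) * ((r*(r^2+2*r+3)/(2*(r+1)^2))
        + ((r+2)/(2*(r+1)^2) - 2*(r^3/(2*(r+1)^2))/((m:ℝ)^2+m)) * m) := by ring
    _ = (N:ℝ) * ((1 + ((m:ℝ)-1) * r) / m) := by rw [hid]

end QMPC

/-- For `1 < m ≤ N`, the complex quasimaximal relative projection constant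
satisfies `μ_ℂ(m,N) ≤ δ_{m, m²} = (1/m)(1 + (m-1)√(m+1))`. -/
theorem quasiMaxRelProjConst_complex_le (m N : ℕ) (hm : 1 < m) (hmN : m ≤ N) :
    quasiMaxRelProjConst ℂ m N ≤ deltaConst m (m ^ 2) ∧
    deltaConst m (m ^ 2) =
      (1 / (m : ℝ)) * (1 + ((m : ℝ) - 1) * Real.sqrt ((m : ℝ) + 1)) := by
  have hm2 : (2:ℝ) ≤ (m:ℝ) := by exact_mod_cast hm
  have hm0 : (0:ℝ) < (m:ℝ) := by linarith
  have hdelta : deltaConst m (m ^ 2) =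
      (1 / (m : ℝ)) * (1 + ((m : ℝ) - 1) * Real.sqrt ((m : ℝ) + 1)) := by
    rw [deltaConst]
    push_cast
    have h1 : (((m:ℝ)^2) - 1) * (((m:ℝ)^2) - m) / m = ((m:ℝ)-1)^2 * ((m:ℝ)+1) := by
      field_simp
      ring
    rw [h1, Real.sqrt_mul (sq_nonneg _), Real.sqrt_sq (by linarith : (0:ℝ) ≤ (m:ℝ)-1)]
    rw [show (m:ℝ)/((m:ℝ)^2) = 1/(m:ℝ) from by field_simp]
  refine ⟨?_, hdelta⟩
  rw [hdelta]
  have hbound : (0:ℝ) ≤ (1 / (m : ℝ)) * (1 + ((m : ℝ) - 1) * Real.sqrt ((m : ℝ) + 1)) := by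
    have := Real.sqrt_nonneg ((m:ℝ)+1)
    apply mul_nonneg (by positivity)
    nlinarith
  apply Real.sSup_le _ hbound
  rintro x ⟨U, hU, rfl⟩
  have hkey := QMPC.lem_key hm U hU
  have hN : (0:ℝ) < (N:ℝ) := by
    have : 0 < N := lt_of_lt_of_le (by omega) hmN
    exact_mod_cast this
  calc 1/(N:ℝ) * ∑ i, ∑ j, ‖(U.conjTranspose * U) i j‖
      ≤ 1/(N:ℝ) * ((N:ℝ) * ((1 + ((m:ℝ)-1) * Real.sqrt ((m:ℝ)+1))/m)) := by
        apply mul_le_mul_of_nonneg_left hkey (by positivity)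
    _ = (1 / (m : ℝ)) * (1 + ((m : ℝ) - 1) * Real.sqrt ((m : ℝ) + 1)) := by
        field_simp
end
end

section
/- Let K = ℝ or ℂ and let u_1,…,u_N ∈ K^m be nonzero vectors whose associated matrix U (with columns u_1,…,u_N) satisfies U U* = I_m. Then ∑_{i,j=1}^N |⟨u_i,u_j⟩|² / (‖u_i‖·‖u_j‖) ≤ N. -/
open scoped BigOperators

noncomputable section

/-- If `u 1, …, u N ∈ K^m` are nonzero vectors whose associated matrix `U`
(with columns `u i`) satisfies `U Uᴴ = I_m`, then
`∑_{i,j} |⟨u_i,u_j⟩|² / (‖u_i‖ ‖u_j‖) ≤ N`. -/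
theorem sum_normalized_inner_sq_le (K : Type*) [RCLike K] (m N : ℕ)
    (u : Fin N → EuclideanSpace K (Fin m)) (hu : ∀ i, u i ≠ 0)
    (hU : (Matrix.of fun k i => u i k : Matrix (Fin m) (Fin N) K) *
        (Matrix.of fun k i => u i k : Matrix (Fin m) (Fin N) K).conjTranspose = 1) :
    ∑ i, ∑ j, ‖(inner K (u i) (u j) : K)‖ ^ 2 / (‖u i‖ * ‖u j‖) ≤ (N : ℝ) := by
  have key : ∀ i, ∑ j, ‖(inner K (u i) (u j) : K)‖ ^ 2 = ‖u i‖ ^ 2 := by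
    intro i
    have hent : ∀ k l, ∑ j, (u j k) * (starRingEnd K) (u j l) = if k = l then 1 else 0 := by
      intro k l
      have := congrFun (congrFun hU k) l
      simpa [Matrix.mul_apply, Matrix.one_apply, Matrix.conjTranspose_apply] using this
    have hK : ∑ j, (inner K (u i) (u j) : K) * (starRingEnd K) (inner K (u i) (u j))
        = ((‖u i‖ : K)) ^ 2 := by
      have expand : ∀ j, (inner K (u i) (u j) : K) * (starRingEnd K) (inner K (u i) (u j))
          = ∑ k, ∑ l, ((starRingEnd K) (u i k) * u i l) * (u j k * (starRingEnd K) (u j l)) := by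
        intro j
        simp only [PiLp.inner_apply, RCLike.inner_apply, map_sum, map_mul, RCLike.conj_conj]
        rw [Finset.sum_mul_sum]
        exact Finset.sum_congr rfl fun k _ => Finset.sum_congr rfl fun l _ => by ring
      calc ∑ j, (inner K (u i) (u j) : K) * (starRingEnd K) (inner K (u i) (u j))
          = ∑ j, ∑ k, ∑ l, ((starRingEnd K) (u i k) * u i l) * (u j k * (starRingEnd K) (u j l)) :=
            Finset.sum_congr rfl fun j _ => expand j
        _ = ∑ k, ∑ l, ((starRingEnd K) (u i k) * u i l) * ∑ j, (u j k * (starRingEnd K) (u j l)) := by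
            rw [Finset.sum_comm]
            refine Finset.sum_congr rfl fun k _ => ?_
            rw [Finset.sum_comm]
            exact Finset.sum_congr rfl fun l _ => (Finset.mul_sum _ _ _).symm
        _ = ∑ k, (starRingEnd K) (u i k) * u i k := by
            simp [hent, Finset.sum_ite_eq]
        _ = ((‖u i‖ : K)) ^ 2 := by
            rw [← inner_self_eq_norm_sq_to_K]
            simp only [PiLp.inner_apply, RCLike.inner_apply, mul_comm]
    have := congrArg RCLike.re hK
    simp only [RCLike.mul_conj] at this
    exact_mod_cast this
  have key' : ∀ j, ∑ i, ‖(inner K (u i) (u j) : K)‖ ^ 2 = ‖u j‖ ^ 2 := by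
    intro j
    calc ∑ i, ‖(inner K (u i) (u j) : K)‖ ^ 2 = ∑ i, ‖(inner K (u j) (u i) : K)‖ ^ 2 := by
          refine Finset.sum_congr rfl fun i _ => ?_
          rw [norm_inner_symm]
      _ = ‖u j‖ ^ 2 := key j
  have hpos : ∀ i, (0:ℝ) < ‖u i‖ := fun i => norm_pos_iff.mpr (hu i)
  have step : ∀ i j, ‖(inner K (u i) (u j) : K)‖ ^ 2 / (‖u i‖ * ‖u j‖) ≤
      ‖(inner K (u i) (u j) : K)‖ ^ 2 / (2 * ‖u i‖ ^ 2) +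
      ‖(inner K (u i) (u j) : K)‖ ^ 2 / (2 * ‖u j‖ ^ 2) := by
    intro i j
    have hi := hpos i; have hj := hpos j
    have h1 : 1 / (‖u i‖ * ‖u j‖) ≤ 1 / (2 * ‖u i‖ ^ 2) + 1 / (2 * ‖u j‖ ^ 2) := by
      rw [div_add_div _ _ (by positivity) (by positivity),
        div_le_div_iff₀ (by positivity) (by positivity)]
      nlinarith [sq_nonneg (‖u i‖ - ‖u j‖), mul_pos hi hj]
    have hc : (0:ℝ) ≤ ‖(inner K (u i) (u j) : K)‖ ^ 2 := by positivity
    calc ‖(inner K (u i) (u j) : K)‖ ^ 2 / (‖u i‖ * ‖u j‖)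
        = ‖(inner K (u i) (u j) : K)‖ ^ 2 * (1 / (‖u i‖ * ‖u j‖)) := by ring
      _ ≤ ‖(inner K (u i) (u j) : K)‖ ^ 2 * (1 / (2 * ‖u i‖ ^ 2) + 1 / (2 * ‖u j‖ ^ 2)) :=
          mul_le_mul_of_nonneg_left h1 hc
      _ = _ := by ring
  calc ∑ i, ∑ j, ‖(inner K (u i) (u j) : K)‖ ^ 2 / (‖u i‖ * ‖u j‖)
      ≤ ∑ i, ∑ j, (‖(inner K (u i) (u j) : K)‖ ^ 2 / (2 * ‖u i‖ ^ 2) +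
          ‖(inner K (u i) (u j) : K)‖ ^ 2 / (2 * ‖u j‖ ^ 2)) :=
        Finset.sum_le_sum fun i _ => Finset.sum_le_sum fun j _ => step i j
    _ = (∑ i, ∑ j, ‖(inner K (u i) (u j) : K)‖ ^ 2 / (2 * ‖u i‖ ^ 2)) +
        ∑ i, ∑ j, ‖(inner K (u i) (u j) : K)‖ ^ 2 / (2 * ‖u j‖ ^ 2) := by
        rw [← Finset.sum_add_distrib]
        exact Finset.sum_congr rfl fun i _ => Finset.sum_add_distrib
    _ = (N : ℝ) / 2 + (N : ℝ) / 2 := by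
        congr 1
        · calc ∑ i, ∑ j, ‖(inner K (u i) (u j) : K)‖ ^ 2 / (2 * ‖u i‖ ^ 2)
              = ∑ i : Fin N, (1:ℝ) / 2 := by
                refine Finset.sum_congr rfl fun i _ => ?_
                rw [← Finset.sum_div, key i]
                rw [div_eq_div_iff (mul_pos two_pos (pow_pos (hpos i) 2)).ne' (two_ne_zero)]; ring
            _ = (N : ℝ) / 2 := by simp; ring
        · calc ∑ i, ∑ j, ‖(inner K (u i) (u j) : K)‖ ^ 2 / (2 * ‖u j‖ ^ 2)
              = ∑ j, ∑ i, ‖(inner K (u i) (u j) : K)‖ ^ 2 / (2 * ‖u j‖ ^ 2) := Finset.sum_comm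
            _ = ∑ j : Fin N, (1:ℝ) / 2 := by
                refine Finset.sum_congr rfl fun j _ => ?_
                rw [← Finset.sum_div, key' j]
                rw [div_eq_div_iff (mul_pos two_pos (pow_pos (hpos j) 2)).ne' (two_ne_zero)]; ring
            _ = (N : ℝ) / 2 := by simp; ring
    _ = (N : ℝ) := by ring
end
end

section
/- Let K = ℝ or ℂ, let U ∈ K^{m×N} satisfy U U* = I_m with columns u_1,…,u_N, and let n_1,…,n_N be positive integers. Set Ñ = n_1² + ⋯ + n_N². Then the matrix V ∈ K^{m×Ñ} whose columns consist, for each i = 1,…,N, of n_i² copies of (1/n_i)·u_i, satisfies V V* = I_m and (1/Ñ)∑_{i,j=1}^{Ñ} |(V*V)_{ij}| = (1/Ñ)∑_{i,j=1}^{N} n_i·n_j·|⟨u_i,u_j⟩|. In particular μ_K(m,Ñ) ≥ (1/Ñ)∑_{i,j=1}^{N} n_i n_j |⟨u_i,u_j⟩|. -/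
open scoped BigOperators

noncomputable section

lemma fiber_sum {N N₂ : ℕ} (c : Fin N₂ → Fin N) (n : Fin N → ℕ)
    (hc : ∀ i, (Finset.univ.filter fun j => c j = i).card = n i ^ 2)
    {M : Type*} [AddCommMonoid M] (f : Fin N → M) :
    ∑ p, f (c p) = ∑ i, (n i ^ 2) • f i := by
  rw [← Finset.sum_fiberwise Finset.univ c (fun p => f (c p))]
  refine Finset.sum_congr rfl fun i _ => ?_
  calc ∑ p ∈ Finset.univ.filter (fun p => c p = i), f (c p)
      = ∑ _p ∈ Finset.univ.filter (fun p => c p = i), f i :=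
        Finset.sum_congr rfl fun p hp => by rw [(Finset.mem_filter.mp hp).2]
    _ = _ := by rw [Finset.sum_const, hc]

/-- Let `U ∈ K^{m×N}` with columns `u 1, …, u N` satisfy `U Uᴴ = I_m`, let
`n 1, …, n N` be positive integers and `N₂ = ∑ n_i²`. Then the matrix `V ∈ K^{m×N₂}` whose
columns consist, for each `i`, of `n_i²` copies of `(1/n_i) u_i` (encoded by a block-assignment
map `c : Fin N₂ → Fin N` whose fibre over `i` has `n_i²` elements) satisfies `V Vᴴ = I_m` and
`(1/N₂) ∑_{i,j} |(VᴴV)_{ij}| = (1/N₂) ∑_{i,j} n_i n_j |⟨u_i,u_j⟩|`; in particular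
`μ_K(m,N₂) ≥ (1/N₂) ∑_{i,j} n_i n_j |⟨u_i,u_j⟩|`. -/
theorem blowup_matrix (K : Type*) [RCLike K] (m N N₂ : ℕ)
    (U : Matrix (Fin m) (Fin N) K) (hU : U * U.conjTranspose = 1)
    (n : Fin N → ℕ) (hn : ∀ i, 0 < n i) (hN₂ : N₂ = ∑ i, n i ^ 2)
    (c : Fin N₂ → Fin N)
    (hc : ∀ i, (Finset.univ.filter fun j => c j = i).card = n i ^ 2)
    (V : Matrix (Fin m) (Fin N₂) K)
    (hV : ∀ k j, V k j = ((n (c j) : K))⁻¹ * U k (c j)) :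
    V * V.conjTranspose = 1 ∧
    (1 / (N₂ : ℝ)) * ∑ i, ∑ j, ‖(V.conjTranspose * V) i j‖ =
      (1 / (N₂ : ℝ)) * ∑ i, ∑ j, (n i : ℝ) * (n j : ℝ) * ‖(U.conjTranspose * U) i j‖ ∧
    (1 / (N₂ : ℝ)) * ∑ i, ∑ j, (n i : ℝ) * (n j : ℝ) * ‖(U.conjTranspose * U) i j‖ ≤
      quasiMaxRelProjConst K m N₂ := by

  have hnK : ∀ i, ((n i : K)) ≠ 0 := fun i => Nat.cast_ne_zero.mpr (hn i).ne'
  have h1 : V * V.conjTranspose = 1 := by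
    ext k l
    have hL : (V * V.conjTranspose) k l
        = ∑ p, (fun i => (n i : K)⁻¹ * U k i * star ((n i : K)⁻¹ * U l i)) (c p) := by
      simp [Matrix.mul_apply, Matrix.conjTranspose_apply, hV]
    rw [hL, fiber_sum c n hc (fun i => (n i : K)⁻¹ * U k i * star ((n i : K)⁻¹ * U l i))]
    have hterm : ∀ i : Fin N,
        (n i ^ 2) • ((n i : K)⁻¹ * U k i * star ((n i : K)⁻¹ * U l i))
        = U k i * star (U l i) := by
      intro i
      rw [star_mul', star_inv₀, star_natCast, nsmul_eq_mul]
      push_cast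
      field_simp [hnK i]
    rw [Finset.sum_congr rfl fun i _ => hterm i, ← hU]
    simp [Matrix.mul_apply, Matrix.conjTranspose_apply]
  have hent : ∀ p q, (V.conjTranspose * V) p q
      = (n (c p) : K)⁻¹ * (n (c q) : K)⁻¹ * (U.conjTranspose * U) (c p) (c q) := by
    intro p q
    simp only [Matrix.mul_apply, Matrix.conjTranspose_apply, hV]
    rw [Finset.mul_sum]
    refine Finset.sum_congr rfl fun k _ => ?_
    rw [star_mul', star_inv₀, star_natCast]
    ring
  have hnorm : ∀ p q, ‖(V.conjTranspose * V) p q‖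
      = ((n (c p) : ℝ))⁻¹ * ((n (c q) : ℝ))⁻¹ * ‖(U.conjTranspose * U) (c p) (c q)‖ := by
    intro p q
    rw [hent, norm_mul, norm_mul, norm_inv, norm_inv, RCLike.norm_natCast,
      RCLike.norm_natCast]
  have h2sum : ∑ p, ∑ q, ‖(V.conjTranspose * V) p q‖
      = ∑ i, ∑ j, (n i : ℝ) * (n j : ℝ) * ‖(U.conjTranspose * U) i j‖ := by
    calc ∑ p, ∑ q, ‖(V.conjTranspose * V) p q‖
        = ∑ p, (fun i => ∑ j, (n j ^ 2) •
            ((n i : ℝ)⁻¹ * (n j : ℝ)⁻¹ * ‖(U.conjTranspose * U) i j‖)) (c p) :=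
          Finset.sum_congr rfl fun p _ =>
            (Finset.sum_congr rfl fun q _ => hnorm p q).trans
              (fiber_sum c n hc (fun j => (n (c p) : ℝ)⁻¹ * (n j : ℝ)⁻¹ *
                ‖(U.conjTranspose * U) (c p) j‖))
      _ = ∑ i, (n i ^ 2) • ∑ j, (n j ^ 2) •
            ((n i : ℝ)⁻¹ * (n j : ℝ)⁻¹ * ‖(U.conjTranspose * U) i j‖) :=
          fiber_sum c n hc (fun i => ∑ j, (n j ^ 2) •
            ((n i : ℝ)⁻¹ * (n j : ℝ)⁻¹ * ‖(U.conjTranspose * U) i j‖))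
      _ = _ := by
          refine Finset.sum_congr rfl fun i _ => ?_
          rw [nsmul_eq_mul, Finset.mul_sum]
          refine Finset.sum_congr rfl fun j _ => ?_
          rw [nsmul_eq_mul]
          have hi : ((n i : ℝ)) ≠ 0 := Nat.cast_ne_zero.mpr (hn i).ne'
          have hj : ((n j : ℝ)) ≠ 0 := Nat.cast_ne_zero.mpr (hn j).ne'
          push_cast
          field_simp
  refine ⟨h1, by rw [h2sum], ?_⟩
  have hmem : (1 / (N₂ : ℝ)) * ∑ i, ∑ j, (n i : ℝ) * (n j : ℝ) *
      ‖(U.conjTranspose * U) i j‖ ∈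
      {x : ℝ | ∃ W : Matrix (Fin m) (Fin N₂) K, W * W.conjTranspose = 1 ∧
        x = (1 / (N₂ : ℝ)) * ∑ i, ∑ j, ‖(W.conjTranspose * W) i j‖} :=
    ⟨V, h1, by rw [h2sum]⟩
  have hbdd : BddAbove {x : ℝ | ∃ W : Matrix (Fin m) (Fin N₂) K,
      W * W.conjTranspose = 1 ∧
      x = (1 / (N₂ : ℝ)) * ∑ i, ∑ j, ‖(W.conjTranspose * W) i j‖} := by
    refine ⟨(m : ℝ) * N₂, fun x hx => ?_⟩
    obtain ⟨W, hW, rfl⟩ := hx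
    have hentry : ∀ k j, ‖W k j‖ ≤ 1 := by
      intro k j
      have h := congrFun (congrFun hW k) k
      rw [Matrix.mul_apply, Matrix.one_apply_eq] at h
      have h2 : ∑ q, (‖W k q‖ ^ 2 : ℝ) = 1 := by
        have hK : ((∑ q, (‖W k q‖ ^ 2 : ℝ) : ℝ) : K) = 1 := by
          push_cast
          rw [← h]
          refine (Finset.sum_congr rfl fun q _ => ?_).symm
          rw [Matrix.conjTranspose_apply]
          exact RCLike.mul_conj (W k q)
        exact_mod_cast hK
      have h3 : ‖W k j‖ ^ 2 ≤ 1 := by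
        rw [← h2]
        exact Finset.single_le_sum (fun q _ => sq_nonneg ‖W k q‖) (Finset.mem_univ j)
      nlinarith [norm_nonneg (W k j)]
    have hWent : ∀ i j, ‖(W.conjTranspose * W) i j‖ ≤ (m : ℝ) := by
      intro i j
      rw [Matrix.mul_apply]
      calc ‖∑ k, W.conjTranspose i k * W k j‖
          ≤ ∑ k, ‖W.conjTranspose i k * W k j‖ := norm_sum_le _ _
        _ ≤ ∑ _k : Fin m, (1 : ℝ) := by
            refine Finset.sum_le_sum fun k _ => ?_
            rw [norm_mul, Matrix.conjTranspose_apply, norm_star]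
            exact mul_le_one₀ (hentry k i) (norm_nonneg _) (hentry k j)
        _ = (m : ℝ) := by simp
    have hsum : ∑ i, ∑ j, ‖(W.conjTranspose * W) i j‖ ≤ (N₂ : ℝ) * ((N₂ : ℝ) * m) := by
      calc ∑ i, ∑ j, ‖(W.conjTranspose * W) i j‖
          ≤ ∑ _i : Fin N₂, ((N₂ : ℝ) * m) := by
            refine Finset.sum_le_sum fun i _ => ?_
            calc ∑ j, ‖(W.conjTranspose * W) i j‖
                ≤ ∑ _j : Fin N₂, (m : ℝ) := Finset.sum_le_sum fun j _ => hWent i j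
              _ = (N₂ : ℝ) * m := by simp [mul_comm]
        _ = (N₂ : ℝ) * ((N₂ : ℝ) * m) := by simp [mul_comm]
    rcases Nat.eq_zero_or_pos N₂ with h0 | hpos
    · subst h0
      simp
    · have hN : (0 : ℝ) < N₂ := by exact_mod_cast hpos
      calc (1 / (N₂ : ℝ)) * ∑ i, ∑ j, ‖(W.conjTranspose * W) i j‖
          ≤ (1 / (N₂ : ℝ)) * ((N₂ : ℝ) * ((N₂ : ℝ) * m)) := by
            exact mul_le_mul_of_nonneg_left hsum (by positivity)
        _ = (m : ℝ) * N₂ := by field_simp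
  rw [quasiMaxRelProjConst]
  exact le_csSup hbdd hmem
end
end
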